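/- arXiv:2007.05737 — 9 statements merged into one kernel-verified Lean document; each statement's English description precedes it below -/
import Mathlib

section
/- Truncated polynomial series bound: Let α > 1 and κ ≥ 1. There exist constants b_l > 0 and b > 0 depending only on α and κ such that: (a) for every σ ∈ (0, κ], b_l · σ^{(α−1)/α} ≤ Σ_{j=1}^∞ min{σ, κ·j^{−α}}; and (b) for every σ > 0, Σ_{j=1}^∞ min{σ, κ·j^{−α}} ≤ b · σ · max{σ^{−1/α}, 1}. -/
open Real Finset

-- Bernoulli-based convexity inequality
lemma key_ineq (α : ℝ) (hα : 1 < α) {x : ℝ} (hx : 1 ≤ x) :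
    (α - 1) * (x + 1) ^ (-α) ≤ x ^ (1 - α) - (x + 1) ^ (1 - α) := by
  have hx0 : (0:ℝ) < x := lt_of_lt_of_le one_pos hx
  have hx1 : (0:ℝ) < x + 1 := by linarith
  have hinv : (0:ℝ) ≤ x⁻¹ := by positivity
  have hB : 1 + α * x⁻¹ ≤ (1 + x⁻¹) ^ α :=
    one_add_mul_self_le_rpow_one_add (by linarith) hα.le
  have hdiv : (1 + x⁻¹) = (x + 1) / x := by field_simp
  have h2 : ((x+1)/x) ^ α = (x+1) ^ α / x ^ α := Real.div_rpow hx1.le hx0.le α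
  -- x + α ≤ x * ((x+1)^α / x^α)
  have h3 : x + α ≤ x * ((x+1) ^ α / x ^ α) := by
    calc x + α = x * (1 + α * x⁻¹) := by field_simp
    _ ≤ x * (1 + x⁻¹) ^ α := by nlinarith
    _ = x * ((x+1) ^ α / x ^ α) := by rw [hdiv, h2]
  have hxα : (0:ℝ) < x ^ α := Real.rpow_pos_of_pos hx0 α
  have hx1α : (0:ℝ) < (x+1) ^ α := Real.rpow_pos_of_pos hx1 α
  have e1 : x ^ (1 - α) = x * (x ^ α)⁻¹ := by
    rw [show (1:ℝ) - α = 1 + -α by ring, Real.rpow_add hx0, Real.rpow_one,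
      Real.rpow_neg hx0.le]
  have e2 : (x+1) ^ (1 - α) = (x+1) * ((x+1) ^ α)⁻¹ := by
    rw [show (1:ℝ) - α = 1 + -α by ring, Real.rpow_add hx1, Real.rpow_one,
      Real.rpow_neg hx1.le]
  have e3 : (x+1) ^ (-α) = ((x+1) ^ α)⁻¹ := Real.rpow_neg hx1.le α
  rw [e1, e2, e3]
  -- goal: (α-1) * ((x+1)^α)⁻¹ ≤ x * (x^α)⁻¹ - (x+1) * ((x+1)^α)⁻¹
  have h4 : (x + α) * ((x+1)^α)⁻¹ ≤ x * (x^α)⁻¹ := by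
    rw [← sub_nonneg]
    have h5 : 0 ≤ x * ((x+1) ^ α / x ^ α) - (x + α) := by linarith
    have heq : x * (x^α)⁻¹ - (x+α) * ((x+1)^α)⁻¹
        = (x * ((x+1)^α / x^α) - (x + α)) * ((x+1)^α)⁻¹ := by
      field_simp
    rw [heq]
    exact mul_nonneg h5 (inv_nonneg.mpr hx1α.le)
  nlinarith [h4]

lemma shifted_summable (α : ℝ) (hα : 1 < α) (m : ℕ) :
    Summable (fun j : ℕ => ((m + 1 + j : ℕ) : ℝ) ^ (-α)) := by
  have h : Summable (fun n : ℕ => (n : ℝ) ^ (-α)) :=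
    Real.summable_nat_rpow.mpr (by linarith)
  have := (summable_nat_add_iff (m + 1)).mpr h
  refine this.congr fun j => ?_
  congr 1
  push_cast; ring

lemma tail_bound (α : ℝ) (hα : 1 < α) (m : ℕ) (hm : 1 ≤ m) :
    ∑' j : ℕ, ((m + 1 + j : ℕ) : ℝ) ^ (-α) ≤ (m : ℝ) ^ (1 - α) / (α - 1) := by
  have hm1 : (1:ℝ) ≤ (m:ℝ) := by exact_mod_cast hm
  set F : ℕ → ℝ := fun j => ((m : ℝ) + j) ^ (1 - α) with hF
  have hαpos : (0:ℝ) < α - 1 := by linarith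
  refine Summable.tsum_le_of_sum_range_le (shifted_summable α hα m) fun n => ?_
  have step : ∀ j : ℕ, ((m + 1 + j : ℕ) : ℝ) ^ (-α) ≤ (F j - F (j+1)) / (α - 1) := by
    intro j
    have hx : (1:ℝ) ≤ (m:ℝ) + j := by
      have : (0:ℝ) ≤ (j:ℝ) := Nat.cast_nonneg j
      linarith
    have hkey := key_ineq α hα hx
    have hc : ((m + 1 + j : ℕ) : ℝ) = ((m:ℝ) + j) + 1 := by push_cast; ring
    rw [hc, le_div_iff₀ hαpos]
    have hc2 : F (j+1) = (((m:ℝ) + j) + 1) ^ (1 - α) := by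
      simp only [hF]; push_cast; ring_nf
    have hc3 : F j = ((m:ℝ) + j) ^ (1 - α) := rfl
    rw [hc2, hc3]
    linarith
  calc ∑ j ∈ range n, ((m + 1 + j : ℕ) : ℝ) ^ (-α)
      ≤ ∑ j ∈ range n, (F j - F (j+1)) / (α - 1) := Finset.sum_le_sum fun j _ => step j
    _ = (F 0 - F n) / (α - 1) := by rw [← Finset.sum_div, Finset.sum_range_sub' F n]
    _ ≤ F 0 / (α - 1) := by
        have hFn : 0 ≤ F n := Real.rpow_nonneg (by positivity) _
        gcongr
        linarith
    _ = (m : ℝ) ^ (1 - α) / (α - 1) := by simp [hF]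


lemma base_summable (α : ℝ) (hα : 1 < α) :
    Summable (fun j : ℕ => ((j + 1 : ℕ) : ℝ) ^ (-α)) := by
  refine (shifted_summable α hα 0).congr fun j => ?_
  congr 2
  omega

lemma aux_final (α κ σ X M : ℝ) (hα1 : 0 < α - 1) (hκ0 : 0 < κ) (hσ : 0 < σ)
    (h4 : X ≤ M) (hM : 1 ≤ M) :
    (2 + 1/(α-1)) * (κ * X * σ) ≤ (3 + 2/(α-1)) * κ * σ * M := by
  have hc0 : (0:ℝ) < 1/(α-1) := by positivity
  rw [show (2:ℝ)/(α-1) = 2*(1/(α-1)) by ring]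
  set c := 1/(α-1) with hc
  have h6 : (2+c) * (κ * X * σ) ≤ (2+c) * (κ * M * σ) := by
    refine mul_le_mul_of_nonneg_left ?_ (by linarith)
    exact mul_le_mul_of_nonneg_right (mul_le_mul_of_nonneg_left h4 hκ0.le) hσ.le
  have h8 : (0:ℝ) ≤ (1+c) * (κ * M * σ) := by
    have h9 : (0:ℝ) ≤ κ * M * σ := by positivity
    nlinarith
  nlinarith [h6, h8]

/-- Truncated polynomial series bound: for `α > 1` and `κ ≥ 1` there are constants
`b_l, b > 0` (depending only on `α, κ`) such that
(a) `b_l·σ^{(α−1)/α} ≤ ∑_{j=1}^∞ min{σ, κ·j^{−α}}` for all `σ ∈ (0, κ]`, and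
(b) `∑_{j=1}^∞ min{σ, κ·j^{−α}} ≤ b·σ·max{σ^{−1/α}, 1}` for all `σ > 0`. -/
theorem truncated_polynomial_bound (α κ : ℝ) (hα : 1 < α) (hκ : 1 ≤ κ) :
    ∃ bl b : ℝ, 0 < bl ∧ 0 < b ∧
      (∀ σ : ℝ, 0 < σ → σ ≤ κ →
        bl * σ ^ ((α - 1) / α) ≤ ∑' j : ℕ, min σ (κ * ((j + 1 : ℕ) : ℝ) ^ (-α))) ∧
      (∀ σ : ℝ, 0 < σ →
        (∑' j : ℕ, min σ (κ * ((j + 1 : ℕ) : ℝ) ^ (-α))) ≤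
          b * σ * max (σ ^ (-(1 / α))) 1) := by
  have hα0 : (0:ℝ) < α := by linarith
  have hα1 : (0:ℝ) < α - 1 := by linarith
  have hκ0 : (0:ℝ) < κ := by linarith
  have hc0 : (0:ℝ) < 1/(α-1) := by positivity
  refine ⟨1/2, (3 + 2/(α-1)) * κ, by norm_num, by positivity, ?_, ?_⟩
  · -- lower bound
    intro σ hσ hσκ
    have hnonneg : ∀ j : ℕ, 0 ≤ min σ (κ * ((j + 1 : ℕ) : ℝ) ^ (-α)) :=
      fun j => le_min hσ.le (by positivity)
    have hsummable : Summable (fun j : ℕ => min σ (κ * ((j + 1 : ℕ) : ℝ) ^ (-α))) :=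
      Summable.of_nonneg_of_le hnonneg (fun j => min_le_right _ _)
        ((base_summable α hα).mul_left κ)
    set N : ℝ := (κ/σ) ^ (α⁻¹) with hNdef
    have hκσ : (1:ℝ) ≤ κ/σ := (one_le_div hσ).mpr hσκ
    have hκσ0 : (0:ℝ) < κ/σ := by positivity
    have hN1 : (1:ℝ) ≤ N := Real.one_le_rpow hκσ (by positivity)
    set m : ℕ := ⌊N⌋₊ with hmdef
    have hm1 : 1 ≤ m := Nat.le_floor (by exact_mod_cast hN1)
    have hmN : (m:ℝ) ≤ N := Nat.floor_le (by linarith)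
    have hNm : N / 2 ≤ (m:ℝ) := by
      rcases le_total N 2 with h | h
      · have : (1:ℝ) ≤ (m:ℝ) := by exact_mod_cast hm1
        linarith
      · have := Nat.sub_one_lt_floor N
        linarith
    have hNα : N ^ (-α) = σ / κ := by
      rw [hNdef, ← Real.rpow_mul hκσ0.le]
      rw [show α⁻¹ * (-α) = -1 by field_simp, Real.rpow_neg_one, inv_div]
    have hmin : ∀ j < m, min σ (κ * ((j + 1 : ℕ) : ℝ) ^ (-α)) = σ := by
      intro j hj
      have hj1 : ((j + 1 : ℕ) : ℝ) ≤ N := by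
        have h1 : (j + 1 : ℕ) ≤ m := hj
        have h2 : ((j + 1 : ℕ) : ℝ) ≤ (m:ℝ) := by exact_mod_cast h1
        linarith
      have hpos : (0:ℝ) < ((j + 1 : ℕ) : ℝ) := by positivity
      have h1 : N ^ (-α) ≤ ((j + 1 : ℕ) : ℝ) ^ (-α) :=
        Real.rpow_le_rpow_of_nonpos hpos hj1 (by linarith)
      have h2 : σ ≤ κ * ((j + 1 : ℕ) : ℝ) ^ (-α) := by
        rw [hNα] at h1
        have := mul_le_mul_of_nonneg_left h1 hκ0.le
        calc σ = κ * (σ / κ) := by field_simp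
          _ ≤ κ * ((j + 1 : ℕ) : ℝ) ^ (-α) := this
      exact min_eq_left h2
    have hsum_ge : (m:ℝ) * σ ≤ ∑' j : ℕ, min σ (κ * ((j + 1 : ℕ) : ℝ) ^ (-α)) := by
      have h1 := Summable.sum_le_tsum (Finset.range m) (fun j _ => hnonneg j) hsummable
      have hs : ∑ j ∈ Finset.range m, min σ (κ * ((j + 1 : ℕ) : ℝ) ^ (-α)) = (m:ℝ) * σ := by
        rw [Finset.sum_congr rfl (fun j hj => hmin j (Finset.mem_range.mp hj))]
        simp [mul_comm]
      linarith [hs ▸ h1]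
    have hstep : σ ^ ((α - 1) / α) ≤ N * σ := by
      have h1 : σ ^ (-α⁻¹) ≤ N := by
        have he : σ ^ (-α⁻¹) = (σ⁻¹) ^ (α⁻¹) := by
          rw [← Real.rpow_neg_one σ, ← Real.rpow_mul hσ.le]
          norm_num
        rw [he, hNdef]
        refine Real.rpow_le_rpow (by positivity) ?_ (by positivity)
        rw [div_eq_mul_inv]
        nlinarith [inv_pos.mpr hσ]
      have he2 : σ ^ ((α - 1) / α) = σ ^ (-α⁻¹) * σ := by
        rw [show (α - 1)/α = -α⁻¹ + 1 by field_simp; ring, Real.rpow_add hσ, Real.rpow_one]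
      rw [he2]
      nlinarith [Real.rpow_nonneg hσ.le (-α⁻¹)]
    nlinarith [hsum_ge, hstep, hNm, hσ]
  · -- upper bound
    intro σ hσ
    have hnonneg : ∀ j : ℕ, 0 ≤ min σ (κ * ((j + 1 : ℕ) : ℝ) ^ (-α)) :=
      fun j => le_min hσ.le (by positivity)
    have hgsummable : Summable (fun j : ℕ => κ * ((j + 1 : ℕ) : ℝ) ^ (-α)) :=
      (base_summable α hα).mul_left κ
    have hsummable : Summable (fun j : ℕ => min σ (κ * ((j + 1 : ℕ) : ℝ) ^ (-α))) :=
      Summable.of_nonneg_of_le hnonneg (fun j => min_le_right _ _) hgsummable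
    have hMx : (1:ℝ) ≤ max (σ ^ (-(1 / α))) 1 := le_max_right _ _
    have hMx' : σ ^ (-(1/α)) ≤ max (σ ^ (-(1 / α))) 1 := le_max_left _ _
    have hMx0 : (0:ℝ) < max (σ ^ (-(1 / α))) 1 := by positivity
    rcases le_total κ σ with hσκ | hσκ
    · -- σ ≥ κ : use full series bound
      have hZ : ∑' j : ℕ, ((j + 1 : ℕ) : ℝ) ^ (-α) ≤ 1 + 1/(α-1) := by
        rw [Summable.tsum_eq_zero_add (base_summable α hα)]
        have h0 : (((0:ℕ) + 1 : ℕ) : ℝ) ^ (-α) = 1 := by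
          norm_num
        have htail : ∑' n : ℕ, (((n + 1) + 1 : ℕ) : ℝ) ^ (-α) ≤ 1/(α-1) := by
          have h1 := tail_bound α hα 1 le_rfl
          have h2 : ∑' n : ℕ, (((n + 1) + 1 : ℕ) : ℝ) ^ (-α)
              = ∑' j : ℕ, ((1 + 1 + j : ℕ) : ℝ) ^ (-α) := by
            refine tsum_congr fun n => ?_
            congr 2
            omega
          rw [h2]
          calc ∑' j : ℕ, ((1 + 1 + j : ℕ) : ℝ) ^ (-α) ≤ (1:ℝ) ^ (1-α) / (α-1) := by
                exact_mod_cast h1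
            _ = 1/(α-1) := by rw [Real.one_rpow]
        rw [h0]
        linarith
      have hle : ∑' j : ℕ, min σ (κ * ((j + 1 : ℕ) : ℝ) ^ (-α))
          ≤ κ * (1 + 1/(α-1)) := by
        calc ∑' j : ℕ, min σ (κ * ((j + 1 : ℕ) : ℝ) ^ (-α))
            ≤ ∑' j : ℕ, κ * ((j + 1 : ℕ) : ℝ) ^ (-α) :=
              Summable.tsum_le_tsum (fun j => min_le_right _ _) hsummable hgsummable
          _ = κ * ∑' j : ℕ, ((j + 1 : ℕ) : ℝ) ^ (-α) := tsum_mul_left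
          _ ≤ κ * (1 + 1/(α-1)) := by nlinarith
      calc ∑' j : ℕ, min σ (κ * ((j + 1 : ℕ) : ℝ) ^ (-α)) ≤ κ * (1 + 1/(α-1)) := hle
        _ ≤ (3 + 2/(α-1)) * κ * σ := by
            rw [show (2:ℝ)/(α-1) = 2*(1/(α-1)) by ring]
            set c := 1/(α-1) with hc
            have h1 : κ ≤ κ * σ := by nlinarith
            nlinarith [mul_pos hκ0 hc0, mul_le_mul_of_nonneg_left h1
              (show (0:ℝ) ≤ 3 + 2*c by nlinarith)]
        _ = (3 + 2/(α-1)) * κ * σ * 1 := by ring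
        _ ≤ (3 + 2/(α-1)) * κ * σ * max (σ ^ (-(1 / α))) 1 := by
            have h : (0:ℝ) ≤ (3 + 2/(α-1)) * κ * σ := by positivity
            exact mul_le_mul_of_nonneg_left hMx h
    · -- σ ≤ κ : split the series
      set N : ℝ := (κ/σ) ^ (α⁻¹) with hNdef
      have hκσ : (1:ℝ) ≤ κ/σ := (one_le_div hσ).mpr hσκ
      have hκσ0 : (0:ℝ) < κ/σ := by positivity
      have hN1 : (1:ℝ) ≤ N := Real.one_le_rpow hκσ (by positivity)
      set m : ℕ := ⌈N⌉₊ with hmdef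
      have hm1 : 1 ≤ m := by
        rw [hmdef, Nat.one_le_ceil_iff]
        linarith
      have hNm : N ≤ (m:ℝ) := Nat.le_ceil N
      have hm2N : (m:ℝ) ≤ 2 * N := by
        have := Nat.ceil_lt_add_one (show (0:ℝ) ≤ N by linarith)
        linarith
      -- split
      have hsplit := Summable.sum_add_tsum_nat_add m hsummable
      have hhead : ∑ j ∈ Finset.range m, min σ (κ * ((j + 1 : ℕ) : ℝ) ^ (-α))
          ≤ (m:ℝ) * σ := by
        calc ∑ j ∈ Finset.range m, min σ (κ * ((j + 1 : ℕ) : ℝ) ^ (-α))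
            ≤ ∑ _j ∈ Finset.range m, σ := Finset.sum_le_sum fun j _ => min_le_left _ _
          _ = (m:ℝ) * σ := by simp [mul_comm]
      have htail : ∑' j : ℕ, min σ (κ * ((j + m + 1 : ℕ) : ℝ) ^ (-α))
          ≤ κ * ((m:ℝ) ^ (1 - α) / (α-1)) := by
        have h1 : ∑' j : ℕ, min σ (κ * ((j + m + 1 : ℕ) : ℝ) ^ (-α))
            ≤ ∑' j : ℕ, κ * ((m + 1 + j : ℕ) : ℝ) ^ (-α) := by
          refine Summable.tsum_le_tsum (fun j => ?_) ?_ ((shifted_summable α hα m).mul_left κ)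
          · have : (j + m + 1 : ℕ) = (m + 1 + j : ℕ) := by omega
            rw [this]
            exact min_le_right _ _
          · refine Summable.of_nonneg_of_le (fun j => le_min hσ.le (by positivity))
              (fun j => ?_) ((shifted_summable α hα m).mul_left κ)
            have : (j + m + 1 : ℕ) = (m + 1 + j : ℕ) := by omega
            rw [this]
            exact min_le_right _ _
        calc ∑' j : ℕ, min σ (κ * ((j + m + 1 : ℕ) : ℝ) ^ (-α))
            ≤ ∑' j : ℕ, κ * ((m + 1 + j : ℕ) : ℝ) ^ (-α) := h1
          _ = κ * ∑' j : ℕ, ((m + 1 + j : ℕ) : ℝ) ^ (-α) := tsum_mul_left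
          _ ≤ κ * ((m:ℝ) ^ (1 - α) / (α-1)) := by
              have := tail_bound α hα m hm1
              nlinarith
      -- κ * m^{1-α} ≤ κ * N^{1-α} = N * σ
      have hNσ : κ * (m:ℝ) ^ (1 - α) ≤ N * σ := by
        have h1 : (m:ℝ) ^ (1 - α) ≤ N ^ (1 - α) :=
          Real.rpow_le_rpow_of_nonpos (by linarith) hNm (by linarith)
        have h2 : κ * N ^ (1 - α) = N * σ := by
          rw [hNdef, ← Real.rpow_mul hκσ0.le]
          rw [show α⁻¹ * (1 - α) = α⁻¹ + (-1) by field_simp; ring,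
            Real.rpow_add hκσ0, Real.rpow_neg_one, inv_div]
          field_simp
        calc κ * (m:ℝ) ^ (1 - α) ≤ κ * N ^ (1 - α) :=
              mul_le_mul_of_nonneg_left h1 hκ0.le
          _ = N * σ := h2
      -- N ≤ κ * σ^(-(1/α))
      have hNle : N ≤ κ * σ ^ (-(1/α)) := by
        have h1 : N = κ ^ (α⁻¹) * σ ^ (-α⁻¹) := by
          rw [hNdef, Real.div_rpow hκ0.le hσ.le, Real.rpow_neg hσ.le,
            div_eq_mul_inv]
        have h2 : κ ^ (α⁻¹) ≤ κ := by
          have := Real.rpow_le_rpow_of_exponent_le hκ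
            (show α⁻¹ ≤ 1 by rw [inv_le_one_iff₀]; right; linarith)
          rwa [Real.rpow_one] at this
        have h3 : (0:ℝ) ≤ σ ^ (-α⁻¹) := Real.rpow_nonneg hσ.le _
        rw [h1, show -(1/α) = -α⁻¹ by rw [one_div]]
        exact mul_le_mul_of_nonneg_right h2 h3
      -- combine
      have hcomb : ∑' j : ℕ, min σ (κ * ((j + 1 : ℕ) : ℝ) ^ (-α))
          ≤ (2 + 1/(α-1)) * (N * σ) := by
        rw [← hsplit]
        have hdd : κ * ((m:ℝ) ^ (1 - α) / (α-1)) ≤ (N * σ) / (α-1) := by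
          rw [show κ * ((m:ℝ) ^ (1 - α) / (α-1)) = (κ * (m:ℝ) ^ (1 - α)) / (α-1) by ring]
          exact (div_le_div_iff_of_pos_right hα1).mpr hNσ
        have hNσ2 : (m:ℝ) * σ ≤ 2 * N * σ := by
          have := mul_le_mul_of_nonneg_right hm2N hσ.le
          linarith
        calc (∑ j ∈ Finset.range m, min σ (κ * ((j + 1 : ℕ) : ℝ) ^ (-α)))
              + ∑' j : ℕ, min σ (κ * ((j + m + 1 : ℕ) : ℝ) ^ (-α))
            ≤ (m:ℝ) * σ + κ * ((m:ℝ) ^ (1 - α) / (α-1)) := by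
              exact add_le_add hhead htail
          _ ≤ 2 * N * σ + (N * σ) / (α-1) := by linarith
          _ = (2 + 1/(α-1)) * (N * σ) := by ring
      clear_value N m
      calc ∑' j : ℕ, min σ (κ * ((j + 1 : ℕ) : ℝ) ^ (-α))
          ≤ (2 + 1/(α-1)) * (N * σ) := hcomb
        _ ≤ (2 + 1/(α-1)) * (κ * σ ^ (-(1/α)) * σ) :=
            mul_le_mul_of_nonneg_left (mul_le_mul_of_nonneg_right hNle hσ.le)
              (by linarith)
        _ ≤ (3 + 2/(α-1)) * κ * σ * max (σ ^ (-(1 / α))) 1 :=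
            aux_final α κ σ _ _ hα1 hκ0 hσ hMx' hMx
end

section
/- Values of q* and r under polynomial decay: Let Δ(j) = κ·j^{−α} for j ≥ 1 with κ > 0 and α > 1. There exist constants 0 < c ≤ C depending only on α and κ such that for all x > 0: c·max{x^{−1/α}, 1} ≤ q*(x) ≤ C·max{x^{−1/α}, 1}, and there exist constants 0 < c' ≤ C' depending only on α and κ such that for all δ > 0: c'·min{δ^{α/(α−1)}, δ} ≤ r(δ) ≤ C'·min{δ^{α/(α−1)}, δ}. -/
open Real

/-- `β(q) = ∑_{j=q}^∞ Δ(j)`. -/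
noncomputable def betaFn (Δ : ℕ → ℝ) (q : ℕ) : ℝ := ∑' j : ℕ, Δ (j + q)

/-- `q*(x) = min{q ∈ ℕ, q ≥ 1 : β(q) ≤ q·x}`. -/
noncomputable def qstar (Δ : ℕ → ℝ) (x : ℝ) : ℕ :=
  sInf {q : ℕ | 1 ≤ q ∧ betaFn Δ q ≤ (q : ℝ) * x}

/-- `r(δ) = max{r > 0 : q*(r)·r ≤ δ}`. -/
noncomputable def rFn (Δ : ℕ → ℝ) (δ : ℝ) : ℝ :=
  sSup {r : ℝ | 0 < r ∧ (qstar Δ r : ℝ) * r ≤ δ}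


lemma aux_bernoulli_neg {p u : ℝ} (hp : 0 ≤ p) (hu0 : 0 ≤ u) (hu1 : u < 1) :
    (1 + p * u) * (1 - u) ^ p ≤ 1 := by
  have h0 : (0:ℝ) < 1 - u := by linarith
  have h1 : (1 - u : ℝ) ^ p ≤ Real.exp (-(p * u)) := by
    rw [← Real.exp_log h0, ← Real.exp_mul]
    apply Real.exp_le_exp.mpr
    have hl := Real.log_le_sub_one_of_pos h0
    nlinarith
  have h2 : 1 + p * u ≤ Real.exp (p * u) := by
    linarith [Real.add_one_le_exp (p * u)]
  calc (1 + p * u) * (1 - u) ^ p ≤ Real.exp (p * u) * Real.exp (-(p * u)) := by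
        apply mul_le_mul h2 h1 (Real.rpow_nonneg h0.le p) (Real.exp_pos _).le
    _ = 1 := by rw [← Real.exp_add]; simp

lemma step_ineq {α : ℝ} (hα : 1 < α) {m : ℝ} (hm : 1 ≤ m) :
    (α - 1) * (m + 1) ^ (-α) ≤ m ^ (1 - α) - (m + 1) ^ (1 - α) := by
  have hm0 : (0:ℝ) < m := by linarith
  have hm1 : (0:ℝ) < m + 1 := by linarith
  set u : ℝ := 1 / (m + 1) with hu
  have hu0 : 0 ≤ u := by positivity
  have hu1 : u < 1 := by rw [hu, div_lt_one hm1]; linarith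
  have key := aux_bernoulli_neg (p := α - 1) (u := u) (by linarith) hu0 hu1
  have h1u : (1 - u) = m / (m + 1) := by rw [hu]; field_simp; ring
  rw [h1u] at key
  have hq : (0:ℝ) < m / (m + 1) := by positivity
  have hpos : (0:ℝ) < (m / (m+1)) ^ (α - 1) := rpow_pos_of_pos hq _
  have h2 : 1 + (α - 1) * u ≤ (m / (m + 1)) ^ (1 - α) := by
    have he : (m / (m + 1)) ^ (1 - α) = ((m / (m+1)) ^ (α - 1))⁻¹ := by
      rw [← Real.rpow_neg hq.le]; ring_nf
    rw [he]
    nlinarith [key, hpos, mul_inv_cancel₀ hpos.ne', inv_nonneg.mpr hpos.le]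
  have hP : (0:ℝ) < (m+1) ^ (1-α) := rpow_pos_of_pos hm1 _
  have hdiv : (m / (m+1)) ^ (1-α) = m ^ (1-α) / (m+1) ^ (1-α) :=
    Real.div_rpow hm0.le hm1.le _
  have hsplit : (m+1) ^ (1-α) = (m+1) * (m+1) ^ (-α) := by
    rw [show (1-α) = 1 + (-α) by ring, Real.rpow_add hm1, Real.rpow_one]
  have h3 : (1 + (α-1) * u) * (m+1) ^ (1-α) ≤ m ^ (1-α) := by
    rw [hdiv] at h2
    calc (1 + (α-1)*u) * (m+1) ^ (1-α)
        ≤ (m ^ (1-α) / (m+1) ^ (1-α)) * (m+1) ^ (1-α) :=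
          mul_le_mul_of_nonneg_right h2 hP.le
      _ = m ^ (1-α) := by field_simp
  have hu' : u * (m+1) = 1 := by rw [hu]; field_simp
  have h4 : (1 + (α-1)*u) * ((m+1) * ((m+1) ^ (-α)))
      = (m+1) * (m+1) ^ (-α) + (α-1) * (u * (m+1)) * (m+1) ^ (-α) := by ring
  rw [hsplit] at h3
  rw [h4, hu'] at h3
  rw [hsplit]
  linarith

lemma summable_shift {α : ℝ} (hα : 1 < α) (κ : ℝ) (q : ℕ) :
    Summable (fun j : ℕ => κ * ((j + q : ℕ) : ℝ) ^ (-α)) := by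
  have h : Summable (fun n : ℕ => κ * (n:ℝ) ^ (-α)) :=
    (Real.summable_nat_rpow.mpr (by linarith)).mul_left κ
  exact h.comp_injective (add_left_injective q)

lemma tail_le {α : ℝ} (hα : 1 < α) {q : ℕ} (hq : 1 ≤ q) :
    ∑' j : ℕ, ((j + q + 1 : ℕ) : ℝ) ^ (-α) ≤ (q:ℝ) ^ (1-α) / (α-1) := by
  set F : ℕ → ℝ := fun k => ((k + q : ℕ) : ℝ) ^ (1-α) with hF
  apply tsum_le_of_sum_range_le (fun n => by positivity)
  intro n
  have key : ∀ j : ℕ, ((j + q + 1 : ℕ) : ℝ) ^ (-α) ≤ (F j - F (j+1)) / (α-1) := by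
    intro j
    set m : ℝ := ((j + q : ℕ):ℝ) with hmdef
    have hm : (1:ℝ) ≤ m := by
      rw [hmdef]; exact_mod_cast Nat.one_le_iff_ne_zero.mpr (by omega)
    have hs := step_ineq hα hm
    have e1 : ((j + q + 1 : ℕ):ℝ) = m + 1 := by rw [hmdef]; push_cast; ring
    have e2 : ((j + 1 + q : ℕ):ℝ) = m + 1 := by rw [hmdef]; push_cast; ring
    have eF1 : F j = m ^ (1-α) := by rw [hF]
    have eF2 : F (j+1) = (m + 1) ^ (1-α) := by rw [hF]; simp only [e2]
    rw [e1, eF1, eF2, le_div_iff₀ (by linarith : (0:ℝ) < α - 1)]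
    linarith
  calc ∑ j ∈ Finset.range n, ((j + q + 1 : ℕ) : ℝ) ^ (-α)
      ≤ ∑ j ∈ Finset.range n, (F j - F (j+1)) / (α-1) :=
        Finset.sum_le_sum (fun j _ => key j)
    _ = (F 0 - F n) / (α-1) := by
        rw [← Finset.sum_div, Finset.sum_range_sub' F n]
    _ ≤ (q:ℝ) ^ (1-α) / (α-1) := by
        have h1 : F 0 = (q:ℝ) ^ (1-α) := by rw [hF]; norm_num
        have h2 : 0 ≤ F n := by rw [hF]; positivity
        rw [h1]
        gcongr
        all_goals first | linarith | positivity

lemma betaFn_le {κ α : ℝ} (hκ : 0 < κ) (hα : 1 < α) {q : ℕ} (hq : 1 ≤ q) :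
    betaFn (fun j => κ * (j:ℝ) ^ (-α)) q ≤ (κ * α / (α-1)) * (q:ℝ) ^ (1-α) := by
  have hq0 : (0:ℝ) < (q:ℝ) := by exact_mod_cast hq
  have hq1 : (1:ℝ) ≤ (q:ℝ) := by exact_mod_cast hq
  have hsum := summable_shift hα κ q
  have hsplit : betaFn (fun j => κ * (j:ℝ) ^ (-α)) q
      = κ * ((q:ℕ):ℝ) ^ (-α) + ∑' j : ℕ, κ * ((j + q + 1 : ℕ):ℝ) ^ (-α) := by
    rw [betaFn, Summable.tsum_eq_zero_add hsum]
    congr 1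
    · norm_num
    · exact tsum_congr fun j => by rw [show j + 1 + q = j + q + 1 from by omega]
  rw [hsplit]
  have h1 : κ * ((q:ℕ):ℝ) ^ (-α) ≤ κ * (q:ℝ) ^ (1-α) := by
    apply mul_le_mul_of_nonneg_left _ hκ.le
    exact Real.rpow_le_rpow_of_exponent_le hq1 (by linarith)
  have h2 : ∑' j : ℕ, κ * ((j + q + 1 : ℕ):ℝ) ^ (-α) ≤ κ * ((q:ℝ) ^ (1-α) / (α-1)) := by
    rw [tsum_mul_left]
    exact mul_le_mul_of_nonneg_left (tail_le hα hq) hκ.le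
  have : (κ * α / (α-1)) * (q:ℝ) ^ (1-α)
      = κ * (q:ℝ) ^ (1-α) + κ * ((q:ℝ) ^ (1-α) / (α-1)) := by
    have h : α - 1 ≠ 0 := by linarith
    field_simp
    ring
  linarith

lemma le_betaFn {κ α : ℝ} (hκ : 0 < κ) (hα : 1 < α) {q : ℕ} (hq : 1 ≤ q) :
    κ * 2 ^ (-α) * (q:ℝ) ^ (1-α) ≤ betaFn (fun j => κ * (j:ℝ) ^ (-α)) q := by
  have hq0 : (0:ℝ) < (q:ℝ) := by exact_mod_cast hq
  have hsum := summable_shift hα κ q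
  have hterm : ∀ j ∈ Finset.range q, κ * ((2*q:ℕ):ℝ) ^ (-α) ≤ κ * ((j + q : ℕ):ℝ) ^ (-α) := by
    intro j hj
    apply mul_le_mul_of_nonneg_left _ hκ.le
    apply Real.rpow_le_rpow_of_nonpos
    · exact_mod_cast Nat.add_pos_right j hq
    · have hj' := Finset.mem_range.mp hj
      exact_mod_cast (by omega : j + q ≤ 2*q)
    · linarith
  have hsum_le : ∑ j ∈ Finset.range q, κ * ((2*q:ℕ):ℝ) ^ (-α)
      ≤ ∑ j ∈ Finset.range q, κ * ((j+q:ℕ):ℝ) ^ (-α) := Finset.sum_le_sum hterm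
  have hle_tsum : ∑ j ∈ Finset.range q, κ * ((j+q:ℕ):ℝ) ^ (-α)
      ≤ betaFn (fun j => κ * (j:ℝ) ^ (-α)) q := by
    rw [betaFn]
    exact Summable.sum_le_tsum _ (fun i _ => mul_nonneg hκ.le (Real.rpow_nonneg (Nat.cast_nonneg _) _)) hsum
  have hconst : ∑ _j ∈ Finset.range q, κ * ((2*q:ℕ):ℝ) ^ (-α)
      = (q:ℝ) * (κ * ((2*q:ℕ):ℝ) ^ (-α)) := by
    rw [Finset.sum_const, Finset.card_range, nsmul_eq_mul]
  have hrw : (q:ℝ) * (κ * ((2*q:ℕ):ℝ) ^ (-α)) = κ * 2 ^ (-α) * (q:ℝ) ^ (1-α) := by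
    have h2q : ((2*q:ℕ):ℝ) = 2 * (q:ℝ) := by push_cast; ring
    rw [h2q, Real.mul_rpow (by norm_num) hq0.le]
    rw [show (1-α) = 1 + (-α) by ring, Real.rpow_add hq0, Real.rpow_one]
    ring
  linarith

lemma div_rpow_inv {B x α : ℝ} (hB : 0 ≤ B) (hx : 0 < x) :
    (B / x) ^ α⁻¹ = B ^ α⁻¹ * x ^ (-(1/α)) := by
  rw [Real.div_rpow hB hx.le, Real.rpow_neg hx.le, one_div, div_eq_mul_inv]

/-- membership criterion -/
lemma mem_S_of {κ α x : ℝ} (hκ : 0 < κ) (hα : 1 < α) (hx : 0 < x) {q : ℕ} (hq : 1 ≤ q)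
    (h : κ * α / (α-1) ≤ (q:ℝ) ^ α * x) :
    q ∈ {q : ℕ | 1 ≤ q ∧ betaFn (fun j => κ * (j:ℝ) ^ (-α)) q ≤ (q : ℝ) * x} := by
  have hq0 : (0:ℝ) < (q:ℝ) := by exact_mod_cast hq
  refine ⟨hq, (betaFn_le hκ hα hq).trans ?_⟩
  have h' := mul_le_mul_of_nonneg_right h (rpow_pos_of_pos hq0 (1-α)).le
  calc (κ * α / (α-1)) * (q:ℝ) ^ (1-α) ≤ ((q:ℝ) ^ α * x) * (q:ℝ) ^ (1-α) := h'
    _ = ((q:ℝ) ^ α * (q:ℝ) ^ (1-α)) * x := by ring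
    _ = (q:ℝ) * x := by rw [← Real.rpow_add hq0]; norm_num

lemma of_mem_S {κ α x : ℝ} (hκ : 0 < κ) (hα : 1 < α) (hx : 0 < x) {q : ℕ}
    (h : q ∈ {q : ℕ | 1 ≤ q ∧ betaFn (fun j => κ * (j:ℝ) ^ (-α)) q ≤ (q : ℝ) * x}) :
    κ * 2 ^ (-α) ≤ (q:ℝ) ^ α * x := by
  obtain ⟨hq, hb⟩ := h
  have hq0 : (0:ℝ) < (q:ℝ) := by exact_mod_cast hq
  have h1 : κ * 2 ^ (-α) * (q:ℝ) ^ (1-α) ≤ (q:ℝ) * x := (le_betaFn hκ hα hq).trans hb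
  have h' := mul_le_mul_of_nonneg_right h1 (rpow_pos_of_pos hq0 (α-1)).le
  calc κ * 2 ^ (-α) = κ * 2 ^ (-α) * ((q:ℝ) ^ (1-α) * (q:ℝ) ^ (α-1)) := by
        rw [← Real.rpow_add hq0]; norm_num
    _ = (κ * 2 ^ (-α) * (q:ℝ) ^ (1-α)) * (q:ℝ) ^ (α-1) := by ring
    _ ≤ ((q:ℝ) * x) * (q:ℝ) ^ (α-1) := h'
    _ = ((q:ℝ) ^ (1:ℝ) * (q:ℝ) ^ (α-1)) * x := by rw [Real.rpow_one]; ring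
    _ = (q:ℝ) ^ α * x := by rw [← Real.rpow_add hq0]; norm_num

lemma qstar_bounds {κ α : ℝ} (hκ : 0 < κ) (hα : 1 < α) (x : ℝ) (hx : 0 < x) :
    min ((κ * 2 ^ (-α)) ^ α⁻¹) 1 * max (x ^ (-(1/α))) 1
      ≤ (qstar (fun j => κ * (j:ℝ) ^ (-α)) x : ℝ) ∧
    (qstar (fun j => κ * (j:ℝ) ^ (-α)) x : ℝ)
      ≤ ((κ * α / (α-1)) ^ α⁻¹ + 1) * max (x ^ (-(1/α))) 1 := by
  have hα0 : (0:ℝ) < α := by linarith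
  set Δ := fun j : ℕ => κ * (j:ℝ) ^ (-α) with hΔ
  set S := {q : ℕ | 1 ≤ q ∧ betaFn Δ q ≤ (q : ℝ) * x} with hS
  set K := κ * α / (α-1) with hK
  have hK0 : 0 < K := div_pos (mul_pos hκ (by linarith)) (by linarith)
  set t := (K / x) ^ α⁻¹ with ht
  have ht0 : 0 ≤ t := rpow_nonneg (by positivity) _
  -- the chosen witness
  set q₀ : ℕ := max 1 ⌈t⌉₊ with hq₀
  have hq₀1 : 1 ≤ q₀ := le_max_left _ _
  have hq₀t : t ≤ (q₀:ℝ) := by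
    calc t ≤ (⌈t⌉₊ : ℝ) := Nat.le_ceil t
      _ ≤ (q₀ : ℝ) := by exact_mod_cast le_max_right 1 ⌈t⌉₊
  have hq₀mem : q₀ ∈ S := by
    apply mem_S_of hκ hα hx hq₀1
    have h1 : K / x ≤ (q₀:ℝ) ^ α := by
      calc K / x = t ^ α := by rw [ht, Real.rpow_inv_rpow (by positivity) (by linarith)]
        _ ≤ (q₀:ℝ) ^ α := Real.rpow_le_rpow ht0 hq₀t hα0.le
    rw [hK] at *
    exact (div_le_iff₀ hx).mp h1
  have hSne : S.Nonempty := ⟨q₀, hq₀mem⟩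
  have hmem : qstar Δ x ∈ S := Nat.sInf_mem hSne
  have hq1 : 1 ≤ qstar Δ x := hmem.1
  have hqr0 : (0:ℝ) < (qstar Δ x : ℝ) := by exact_mod_cast hq1
  constructor
  · -- lower bound
    have hB := of_mem_S hκ hα hx hmem
    set B := κ * 2 ^ (-α) with hBdef
    have hB0 : 0 < B := mul_pos hκ (rpow_pos_of_pos two_pos _)
    have h1 : B / x ≤ (qstar Δ x : ℝ) ^ α := (div_le_iff₀ hx).mpr hB
    have h2 : (B / x) ^ α⁻¹ ≤ (qstar Δ x : ℝ) := by
      calc (B / x) ^ α⁻¹ ≤ ((qstar Δ x : ℝ) ^ α) ^ α⁻¹ :=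
            Real.rpow_le_rpow (by positivity) h1 (by positivity)
        _ = (qstar Δ x : ℝ) := Real.rpow_rpow_inv hqr0.le (by linarith)
    rw [div_rpow_inv hB0.le hx] at h2
    rcases le_total (x ^ (-(1/α))) 1 with hc | hc
    · rw [max_eq_right hc]
      calc min (B ^ α⁻¹) 1 * 1 ≤ 1 := by
            rw [mul_one]; exact min_le_right _ _
        _ ≤ (qstar Δ x : ℝ) := by exact_mod_cast hq1
    · rw [max_eq_left hc]
      calc min (B ^ α⁻¹) 1 * x ^ (-(1/α)) ≤ B ^ α⁻¹ * x ^ (-(1/α)) := by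
            apply mul_le_mul_of_nonneg_right (min_le_left _ _)
            exact rpow_nonneg hx.le _
        _ ≤ (qstar Δ x : ℝ) := h2
  · -- upper bound
    have hle : qstar Δ x ≤ q₀ := Nat.sInf_le hq₀mem
    have h1 : (q₀ : ℝ) ≤ t + 1 := by
      rcases max_cases 1 ⌈t⌉₊ with ⟨he, _⟩ | ⟨he, _⟩
      · rw [hq₀, he]; push_cast; linarith
      · rw [hq₀, he]; exact (Nat.ceil_lt_add_one ht0).le
    have ht' : t = K ^ α⁻¹ * x ^ (-(1/α)) := div_rpow_inv hK0.le hx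
    have hM1 : 1 ≤ max (x ^ (-(1/α))) 1 := le_max_right _ _
    have hMx : x ^ (-(1/α)) ≤ max (x ^ (-(1/α))) 1 := le_max_left _ _
    calc (qstar Δ x : ℝ) ≤ (q₀ : ℝ) := by exact_mod_cast hle
      _ ≤ t + 1 := h1
      _ = K ^ α⁻¹ * x ^ (-(1/α)) + 1 := by rw [ht']
      _ ≤ K ^ α⁻¹ * max (x ^ (-(1/α))) 1 + max (x ^ (-(1/α))) 1 := by
          have : 0 ≤ K ^ α⁻¹ := rpow_nonneg hK0.le _
          have h2 : K ^ α⁻¹ * x ^ (-(1/α)) ≤ K ^ α⁻¹ * max (x ^ (-(1/α))) 1 :=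
            mul_le_mul_of_nonneg_left hMx this
          linarith
      _ = (K ^ α⁻¹ + 1) * max (x ^ (-(1/α))) 1 := by ring


lemma rfn_bounds {α : ℝ} (hα : 1 < α) (g : ℝ → ℕ) (c₁ C₁ : ℝ)
    (hc₁ : 0 < c₁) (hc₁1 : c₁ ≤ 1) (hC₁ : 1 ≤ C₁)
    (hlow : ∀ r : ℝ, 0 < r → c₁ * max (r ^ (-(1/α))) 1 ≤ (g r : ℝ))
    (hup : ∀ r : ℝ, 0 < r → (g r : ℝ) ≤ C₁ * max (r ^ (-(1/α))) 1)
    (δ : ℝ) (hδ : 0 < δ) :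
    (min C₁⁻¹ 1) ^ (α/(α-1)) * min (δ ^ (α/(α-1))) δ
        ≤ sSup {r : ℝ | 0 < r ∧ (g r : ℝ) * r ≤ δ} ∧
      sSup {r : ℝ | 0 < r ∧ (g r : ℝ) * r ≤ δ}
        ≤ max (c₁⁻¹ ^ (α/(α-1))) c₁⁻¹ * min (δ ^ (α/(α-1))) δ := by
  have hα0 : (0:ℝ) < α := by linarith
  have hα1 : (0:ℝ) < α - 1 := by linarith
  set β : ℝ := α/(α-1) with hβ
  set γ : ℝ := (α-1)/α with hγ
  have hβ0 : 0 < β := by positivity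
  have hβ1 : 1 ≤ β := by rw [hβ, le_div_iff₀ hα1]; linarith
  have hγ0 : 0 < γ := by positivity
  have hβγ : β * γ = 1 := by rw [hβ, hγ]; field_simp
  have hγβ : γ * β = 1 := by rw [mul_comm]; exact hβγ
  set m : ℝ := min (δ ^ β) δ with hm
  have hm0 : 0 < m := lt_min (rpow_pos_of_pos hδ _) hδ
  set M : ℝ := max (c₁⁻¹ ^ β) c₁⁻¹ with hM
  have hM0 : 0 < M := lt_of_lt_of_le (inv_pos.mpr hc₁) (le_max_right _ _)
  set T : Set ℝ := {r : ℝ | 0 < r ∧ (g r : ℝ) * r ≤ δ} with hT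
  -- facts about the exponent identities
  have f1 : ∀ r : ℝ, 0 < r → r ^ (-(1/α)) * r = r ^ γ := by
    intro r hr
    nth_rewrite 2 [← Real.rpow_one r]
    rw [← Real.rpow_add hr]
    congr 1
    rw [hγ]; field_simp; ring
  -- UPPER BOUND on elements of T
  have hub : ∀ r ∈ T, r ≤ M * m := by
    rintro r ⟨hr0, hr⟩
    have hmax1 : (1:ℝ) ≤ max (r ^ (-(1/α))) 1 := le_max_right _ _
    have hgl := hlow r hr0
    -- from c₁ ≤ g r : r ≤ c₁⁻¹ δ
    have h1 : c₁ ≤ (g r : ℝ) := le_trans (by nlinarith) hgl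
    have h2 : c₁ * r ≤ δ := le_trans (mul_le_mul_of_nonneg_right h1 hr0.le) hr
    have hrδ : r ≤ c₁⁻¹ * δ := by
      rw [← mul_le_mul_iff_right₀ hc₁, ← mul_assoc, mul_inv_cancel₀ hc₁.ne', one_mul]
      exact h2
    -- from c₁ r^{-(1/α)} ≤ g r : r^γ ≤ δ/c₁
    have h3 : c₁ * r ^ (-(1/α)) ≤ (g r : ℝ) := by
      have := mul_le_mul_of_nonneg_left (le_max_left (r ^ (-(1/α))) 1) hc₁.le
      exact le_trans this hgl
    have h4 : c₁ * r ^ γ ≤ δ := by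
      have := mul_le_mul_of_nonneg_right h3 hr0.le
      rw [mul_assoc, f1 r hr0] at this
      exact le_trans this hr
    have h5 : r ^ γ ≤ c₁⁻¹ * δ := by
      rw [← mul_le_mul_iff_right₀ hc₁, ← mul_assoc, mul_inv_cancel₀ hc₁.ne', one_mul]
      exact h4
    have h6 : r ≤ (c₁⁻¹ * δ) ^ β := by
      calc r = (r ^ γ) ^ β := by
            rw [← Real.rpow_mul hr0.le, hγβ, Real.rpow_one]
        _ ≤ (c₁⁻¹ * δ) ^ β := Real.rpow_le_rpow (rpow_nonneg hr0.le _) h5 hβ0.le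
    have h7 : (c₁⁻¹ * δ) ^ β = c₁⁻¹ ^ β * δ ^ β :=
      Real.mul_rpow (inv_nonneg.mpr hc₁.le) hδ.le
    rcases le_total (δ ^ β) δ with hmin | hmin
    · have hmm : m = δ ^ β := min_eq_left hmin
      calc r ≤ c₁⁻¹ ^ β * δ ^ β := by rw [← h7]; exact h6
        _ ≤ M * m := by
            rw [hmm]
            exact mul_le_mul_of_nonneg_right (le_max_left _ _) (rpow_nonneg hδ.le _)
    · have hmm : m = δ := min_eq_right hmin
      calc r ≤ c₁⁻¹ * δ := hrδ
        _ ≤ M * m := by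
            rw [hmm]
            exact mul_le_mul_of_nonneg_right (le_max_right _ _) hδ.le
  have hbdd : BddAbove T := ⟨M * m, hub⟩
  -- LOWER BOUND: witness r₀
  set ε : ℝ := (min C₁⁻¹ 1) ^ β with hε
  have hmin0 : 0 < min C₁⁻¹ 1 := lt_min (inv_pos.mpr (by linarith)) one_pos
  have hmin1 : min C₁⁻¹ 1 ≤ 1 := min_le_right _ _
  have hε0 : 0 < ε := rpow_pos_of_pos hmin0 _
  have hεle : ε ≤ min C₁⁻¹ 1 := by
    calc ε ≤ (min C₁⁻¹ 1) ^ (1:ℝ) :=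
          Real.rpow_le_rpow_of_exponent_ge hmin0 hmin1 hβ1
      _ = min C₁⁻¹ 1 := Real.rpow_one _
  have hC₁0 : (0:ℝ) < C₁ := by linarith
  have hεC : C₁ * ε ≤ 1 := by
    have : ε ≤ C₁⁻¹ := le_trans hεle (min_le_left _ _)
    calc C₁ * ε ≤ C₁ * C₁⁻¹ := mul_le_mul_of_nonneg_left this hC₁0.le
      _ = 1 := mul_inv_cancel₀ hC₁0.ne'
  have hεγ : ε ^ γ ≤ C₁⁻¹ := by
    have : ε ^ γ = min C₁⁻¹ 1 := by
      rw [hε, ← Real.rpow_mul hmin0.le, hβγ, Real.rpow_one]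
    rw [this]; exact min_le_left _ _
  set r₀ : ℝ := ε * m with hr₀
  have hr₀0 : 0 < r₀ := mul_pos hε0 hm0
  have hmem : r₀ ∈ T := by
    refine ⟨hr₀0, ?_⟩
    have hg := hup r₀ hr₀0
    have step : (g r₀ : ℝ) * r₀ ≤ C₁ * max (r₀ ^ γ) r₀ := by
      have h := mul_le_mul_of_nonneg_right hg hr₀0.le
      calc (g r₀ : ℝ) * r₀ ≤ C₁ * max (r₀ ^ (-(1/α))) 1 * r₀ := h
        _ = C₁ * max (r₀ ^ (-(1/α)) * r₀) (1 * r₀) := by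
            rw [mul_assoc, max_mul_of_nonneg _ _ hr₀0.le]
        _ = C₁ * max (r₀ ^ γ) r₀ := by rw [f1 r₀ hr₀0, one_mul]
    have b1 : C₁ * r₀ ≤ δ := by
      have hmδ : m ≤ δ := min_le_right _ _
      calc C₁ * r₀ = (C₁ * ε) * m := by rw [hr₀]; ring
        _ ≤ 1 * δ := mul_le_mul hεC hmδ hm0.le zero_le_one
        _ = δ := one_mul δ
    have b2 : C₁ * r₀ ^ γ ≤ δ := by
      have hmγ : m ^ γ ≤ δ := by
        calc m ^ γ ≤ (δ ^ β) ^ γ :=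
              Real.rpow_le_rpow hm0.le (min_le_left _ _) hγ0.le
          _ = δ := by rw [← Real.rpow_mul hδ.le, hβγ, Real.rpow_one]
      have hsplit : r₀ ^ γ = ε ^ γ * m ^ γ := Real.mul_rpow hε0.le hm0.le
      calc C₁ * r₀ ^ γ = C₁ * (ε ^ γ * m ^ γ) := by rw [hsplit]
        _ ≤ C₁ * (C₁⁻¹ * δ) := by
            apply mul_le_mul_of_nonneg_left _ hC₁0.le
            exact mul_le_mul hεγ hmγ (rpow_nonneg hm0.le _) (inv_nonneg.mpr hC₁0.le)
        _ = δ := by rw [← mul_assoc, mul_inv_cancel₀ hC₁0.ne', one_mul]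
    calc (g r₀ : ℝ) * r₀ ≤ C₁ * max (r₀ ^ γ) r₀ := step
      _ = max (C₁ * r₀ ^ γ) (C₁ * r₀) := mul_max_of_nonneg _ _ hC₁0.le
      _ ≤ δ := max_le b2 b1
  constructor
  · exact le_csSup hbdd hmem
  · exact Real.sSup_le hub (mul_nonneg hM0.le hm0.le)


/-- Values of `q*` and `r` under polynomial decay `Δ(j) = κ·j^{−α}` (`κ > 0`, `α > 1`):
`q*(x) ≍ max{x^{−1/α}, 1}` and `r(δ) ≍ min{δ^{α/(α−1)}, δ}` with constants only
depending on `α` and `κ`. -/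
theorem qstar_r_polynomial_decay (κ α : ℝ) (hκ : 0 < κ) (hα : 1 < α) :
    (∃ c C : ℝ, 0 < c ∧ c ≤ C ∧ ∀ x : ℝ, 0 < x →
      c * max (x ^ (-(1 / α))) 1 ≤ (qstar (fun j => κ * (j : ℝ) ^ (-α)) x : ℝ) ∧
      (qstar (fun j => κ * (j : ℝ) ^ (-α)) x : ℝ) ≤ C * max (x ^ (-(1 / α))) 1) ∧
    (∃ c' C' : ℝ, 0 < c' ∧ c' ≤ C' ∧ ∀ δ : ℝ, 0 < δ →
      c' * min (δ ^ (α / (α - 1))) δ ≤ rFn (fun j => κ * (j : ℝ) ^ (-α)) δ ∧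
      rFn (fun j => κ * (j : ℝ) ^ (-α)) δ ≤ C' * min (δ ^ (α / (α - 1))) δ) := by
  have hα0 : (0:ℝ) < α := by linarith
  set c : ℝ := min ((κ * 2 ^ (-α)) ^ α⁻¹) 1 with hc
  set C : ℝ := (κ * α / (α-1)) ^ α⁻¹ + 1 with hC
  have hc0 : 0 < c :=
    lt_min (Real.rpow_pos_of_pos (mul_pos hκ (Real.rpow_pos_of_pos two_pos _)) _) one_pos
  have hc1 : c ≤ 1 := min_le_right _ _
  have hC1 : (1:ℝ) ≤ C := le_add_of_nonneg_left
    (Real.rpow_nonneg (div_pos (mul_pos hκ hα0) (by linarith)).le _)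
  constructor
  · exact ⟨c, C, hc0, hc1.trans hC1, fun x hx =>
      ⟨(qstar_bounds hκ hα x hx).1, (qstar_bounds hκ hα x hx).2⟩⟩
  · refine ⟨(min C⁻¹ 1) ^ (α/(α-1)), max (c⁻¹ ^ (α/(α-1))) c⁻¹, ?_, ?_, ?_⟩
    · exact Real.rpow_pos_of_pos (lt_min (inv_pos.mpr (by linarith)) one_pos) _
    · have h1 : (min C⁻¹ 1) ^ (α/(α-1)) ≤ 1 :=
        Real.rpow_le_one (le_min (inv_nonneg.mpr (by linarith)) zero_le_one)
          (min_le_right _ _) (by apply div_nonneg <;> linarith)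
      have h2 : (1:ℝ) ≤ c⁻¹ := (one_le_inv₀ hc0).mpr hc1
      exact h1.trans (h2.trans (le_max_right _ _))
    · intro δ hδ
      have h := rfn_bounds hα (qstar (fun j => κ * (j : ℝ) ^ (-α))) c C hc0 hc1 hC1
        (fun r hr => (qstar_bounds hκ hα r hr).1)
        (fun r hr => (qstar_bounds hκ hα r hr).2) δ hδ
      exact ⟨h.1, h.2⟩
end

section
/- Values of q* and r under geometric decay: Let Δ(j) = κ·ρ^j for j ≥ 1 with κ > 0 and ρ ∈ (0,1). There exist constants 0 < c ≤ C depending only on ρ and κ such that for all x > 0: c·max{log(x^{−1}), 1} ≤ q*(x) ≤ C·max{log(x^{−1}), 1}, and there exist constants 0 < c' ≤ C' depending only on ρ and κ such that for all δ > 0: c'·δ/log(max{δ^{−1}, e}) ≤ r(δ) ≤ C'·δ/log(max{δ^{−1}, e}). -/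
lemma beta_geom (κ ρ : ℝ) (hρ0 : 0 < ρ) (hρ1 : ρ < 1) (q : ℕ) :
    betaFn (fun j => κ * ρ ^ j) q = κ / (1 - ρ) * ρ ^ q := by
  unfold betaFn
  simp_rw [pow_add, ← mul_assoc]
  rw [tsum_mul_right, tsum_mul_left, tsum_geometric_of_lt_one hρ0.le hρ1]
  field_simp

section Main

variable {κ ρ : ℝ} (hκ : 0 < κ) (hρ0 : 0 < ρ) (hρ1 : ρ < 1)

-- abbreviations
-- A = κ/(1-ρ), lam = -log ρ, M x = max (log x⁻¹) 1

lemma exp_form (hκ : 0 < κ) (hρ0 : 0 < ρ) (hρ1 : ρ < 1) (q : ℕ) :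
    κ / (1 - ρ) * ρ ^ q = Real.exp (Real.log (κ / (1 - ρ)) + q * Real.log ρ) := by
  have hA : 0 < κ / (1 - ρ) := div_pos hκ (by linarith)
  rw [Real.exp_add, Real.exp_log hA, Real.exp_nat_mul, Real.exp_log hρ0]

/-- membership in the qstar defining set -/
lemma mem_qset (hκ : 0 < κ) (hρ0 : 0 < ρ) (hρ1 : ρ < 1) (x : ℝ) (q : ℕ) :
    q ∈ {q : ℕ | 1 ≤ q ∧ betaFn (fun j => κ * ρ ^ j) q ≤ (q : ℝ) * x} ↔
      1 ≤ q ∧ κ / (1 - ρ) * ρ ^ q ≤ (q : ℝ) * x := by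
  rw [Set.mem_setOf_eq, beta_geom κ ρ hρ0 hρ1]

/-- the explicit witness: `⌈C₀ * M x⌉₊` is in the set, where
`C₀ = (|log A| + 1)/lam`. -/
lemma witness_mem (hκ : 0 < κ) (hρ0 : 0 < ρ) (hρ1 : ρ < 1) (x : ℝ) (hx : 0 < x) :
    (⌈(|Real.log (κ / (1 - ρ))| + 1) / (-Real.log ρ) * max (Real.log x⁻¹) 1⌉₊ : ℕ) ∈
      {q : ℕ | 1 ≤ q ∧ betaFn (fun j => κ * ρ ^ j) q ≤ (q : ℝ) * x} := by
  set A := κ / (1 - ρ) with hAdef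
  have hA : 0 < A := div_pos hκ (by linarith)
  have hlam : 0 < -Real.log ρ := by
    have := Real.log_neg hρ0 hρ1; linarith
  set lam := -Real.log ρ with hlamdef
  set M := max (Real.log x⁻¹) 1 with hMdef
  have hM1 : 1 ≤ M := le_max_right _ _
  set C₀ := (|Real.log A| + 1) / lam with hC0def
  have hC0 : 0 < C₀ := div_pos (by positivity) hlam
  set q := ⌈C₀ * M⌉₊ with hqdef
  have hq1 : 1 ≤ q := Nat.one_le_iff_ne_zero.mpr (by
    simp only [hqdef, ne_eq, Nat.ceil_eq_zero, not_le]
    positivity)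
  have hqge : C₀ * M ≤ (q : ℝ) := Nat.le_ceil _
  rw [mem_qset hκ hρ0 hρ1]
  refine ⟨hq1, ?_⟩
  have hkey : A * ρ ^ q ≤ x := by
    rw [hAdef, exp_form hκ hρ0 hρ1, ← Real.exp_log hx, Real.exp_le_exp]
    have h1 : lam * (q : ℝ) ≥ lam * (C₀ * M) :=
      mul_le_mul_of_nonneg_left hqge hlam.le
    have h2 : lam * (C₀ * M) = (|Real.log A| + 1) * M := by
      field_simp [hC0def]
      rw [hC0def]; field_simp [hlam.ne']
    have h3 : (|Real.log A| + 1) * M ≥ |Real.log A| + M := by nlinarith [abs_nonneg (Real.log A), hM1]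
    have h4 : Real.log x⁻¹ ≤ M := le_max_left _ _
    have h5 : Real.log x⁻¹ = -Real.log x := Real.log_inv x
    have h6 : Real.log A ≤ |Real.log A| := le_abs_self _
    have : (q : ℝ) * Real.log ρ = -(lam * q) := by rw [hlamdef]; ring
    rw [this]
    linarith
  have : x ≤ (q : ℝ) * x := by
    nlinarith [hx, (by exact_mod_cast hq1 : (1:ℝ) ≤ q)]
  linarith

lemma qset_nonempty (hκ : 0 < κ) (hρ0 : 0 < ρ) (hρ1 : ρ < 1) (x : ℝ) (hx : 0 < x) :
    {q : ℕ | 1 ≤ q ∧ betaFn (fun j => κ * ρ ^ j) q ≤ (q : ℝ) * x}.Nonempty :=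
  ⟨_, witness_mem hκ hρ0 hρ1 x hx⟩

/-- qstar upper bound -/
lemma qstar_upper (hκ : 0 < κ) (hρ0 : 0 < ρ) (hρ1 : ρ < 1) (x : ℝ) (hx : 0 < x) :
    (qstar (fun j => κ * ρ ^ j) x : ℝ) ≤
      ((|Real.log (κ / (1 - ρ))| + 1) / (-Real.log ρ) + 1) * max (Real.log x⁻¹) 1 := by
  have hlam : 0 < -Real.log ρ := by have := Real.log_neg hρ0 hρ1; linarith
  set C₀ := (|Real.log (κ / (1 - ρ))| + 1) / (-Real.log ρ) with hC0def
  have hC0 : 0 < C₀ := div_pos (by positivity) hlam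
  set M := max (Real.log x⁻¹) 1 with hMdef
  have hM1 : 1 ≤ M := le_max_right _ _
  have hle : qstar (fun j => κ * ρ ^ j) x ≤ ⌈C₀ * M⌉₊ :=
    Nat.sInf_le (witness_mem hκ hρ0 hρ1 x hx)
  have h1 : ((⌈C₀ * M⌉₊ : ℕ) : ℝ) < C₀ * M + 1 := Nat.ceil_lt_add_one (by positivity)
  have h2 : (qstar (fun j => κ * ρ ^ j) x : ℝ) ≤ (⌈C₀ * M⌉₊ : ℝ) := by exact_mod_cast hle
  nlinarith

/-- qstar ≥ 1 and the inequality it satisfies -/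
lemma qstar_mem (hκ : 0 < κ) (hρ0 : 0 < ρ) (hρ1 : ρ < 1) (x : ℝ) (hx : 0 < x) :
    1 ≤ qstar (fun j => κ * ρ ^ j) x ∧
      κ / (1 - ρ) * ρ ^ qstar (fun j => κ * ρ ^ j) x ≤ (qstar (fun j => κ * ρ ^ j) x : ℝ) * x := by
  have := Nat.sInf_mem (qset_nonempty hκ hρ0 hρ1 x hx)
  rw [mem_qset hκ hρ0 hρ1] at this
  exact this

/-- qstar lower bound: `M x ≤ K * qstar` with `K = 1 + lam + |log A|`. -/
lemma qstar_lower (hκ : 0 < κ) (hρ0 : 0 < ρ) (hρ1 : ρ < 1) (x : ℝ) (hx : 0 < x) :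
    max (Real.log x⁻¹) 1 ≤
      (1 + (-Real.log ρ) + |Real.log (κ / (1 - ρ))|) * (qstar (fun j => κ * ρ ^ j) x : ℝ) := by
  have hA : 0 < κ / (1 - ρ) := div_pos hκ (by linarith)
  have hlam : 0 < -Real.log ρ := by have := Real.log_neg hρ0 hρ1; linarith
  obtain ⟨hq1, hqx⟩ := qstar_mem hκ hρ0 hρ1 x hx
  set q := qstar (fun j => κ * ρ ^ j) x with hqdef
  have hq1' : (1 : ℝ) ≤ (q : ℝ) := by exact_mod_cast hq1
  have hqpos : (0 : ℝ) < q := by linarith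
  set A := κ / (1 - ρ) with hAdef
  set lam := -Real.log ρ with hlamdef
  -- from hqx: exp(log A - lam q) ≤ q x, take logs
  have hexp : A * ρ ^ q = Real.exp (Real.log A + q * Real.log ρ) := exp_form hκ hρ0 hρ1 q
  have hpos : (0 : ℝ) < Real.exp (Real.log A + q * Real.log ρ) := Real.exp_pos _
  have hlog : Real.log A + q * Real.log ρ ≤ Real.log ((q : ℝ) * x) := by
    rw [← Real.log_exp (Real.log A + q * Real.log ρ)]
    exact Real.log_le_log (Real.exp_pos _) (by rw [← hexp]; exact hqx)
  rw [Real.log_mul (ne_of_gt hqpos) (ne_of_gt hx)] at hlog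
  have hlogq : Real.log q ≤ (q : ℝ) := by
    have := Real.log_le_sub_one_of_pos hqpos; linarith
  have h1 : Real.log x⁻¹ ≤ |Real.log A| + lam * q + q := by
    have h5 : Real.log x⁻¹ = -Real.log x := Real.log_inv x
    have h6 : -Real.log A ≤ |Real.log A| := neg_le_abs _
    have : (q : ℝ) * Real.log ρ = -(lam * q) := by rw [hlamdef]; ring
    rw [this] at hlog
    linarith
  have hK : |Real.log A| + lam * q + q ≤ (1 + lam + |Real.log A|) * q := by
    nlinarith [abs_nonneg (Real.log A), hq1']
  have hone : (1 : ℝ) ≤ (1 + lam + |Real.log A|) * q := by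
    nlinarith [abs_nonneg (Real.log A), hq1', hlam]
  exact max_le (by linarith) hone

end Main

set_option maxHeartbeats 2000000 in
/-- Values of `q*` and `r` under geometric decay `Δ(j) = κ·ρ^j` (`κ > 0`, `ρ ∈ (0,1)`):
`q*(x) ≍ max{log(x⁻¹), 1}` and `r(δ) ≍ δ / log(max{δ⁻¹, e})` with constants only
depending on `ρ` and `κ`. -/
theorem qstar_r_geometric_decay (κ ρ : ℝ) (hκ : 0 < κ) (hρ0 : 0 < ρ) (hρ1 : ρ < 1) :
    (∃ c C : ℝ, 0 < c ∧ c ≤ C ∧ ∀ x : ℝ, 0 < x →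
      c * max (Real.log x⁻¹) 1 ≤ (qstar (fun j => κ * ρ ^ j) x : ℝ) ∧
      (qstar (fun j => κ * ρ ^ j) x : ℝ) ≤ C * max (Real.log x⁻¹) 1) ∧
    (∃ c' C' : ℝ, 0 < c' ∧ c' ≤ C' ∧ ∀ δ : ℝ, 0 < δ →
      c' * (δ / Real.log (max δ⁻¹ (Real.exp 1))) ≤ rFn (fun j => κ * ρ ^ j) δ ∧
      rFn (fun j => κ * ρ ^ j) δ ≤ C' * (δ / Real.log (max δ⁻¹ (Real.exp 1)))) := by
  have hlam : 0 < -Real.log ρ := by have := Real.log_neg hρ0 hρ1; linarith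
  obtain ⟨K, hKdef⟩ : ∃ K : ℝ, K = 1 + (-Real.log ρ) + |Real.log (κ / (1 - ρ))| := ⟨_, rfl⟩
  have hK1 : 1 ≤ K := by
    have := abs_nonneg (Real.log (κ / (1 - ρ))); rw [hKdef]; linarith
  have hK0 : 0 < K := by linarith
  obtain ⟨C, hCdef⟩ : ∃ C : ℝ, C = (|Real.log (κ / (1 - ρ))| + 1) / (-Real.log ρ) + 1 := ⟨_, rfl⟩
  have hC1 : 1 ≤ C := by
    have : 0 < (|Real.log (κ / (1 - ρ))| + 1) / (-Real.log ρ) := div_pos (by positivity) hlam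
    rw [hCdef]; linarith
  have hC0 : 0 < C := by linarith
  have hup : ∀ x : ℝ, 0 < x → (qstar (fun j => κ * ρ ^ j) x : ℝ) ≤ C * max (Real.log x⁻¹) 1 := by
    intro x hx
    rw [hCdef]; exact qstar_upper hκ hρ0 hρ1 x hx
  have hlo : ∀ x : ℝ, 0 < x → max (Real.log x⁻¹) 1 ≤ K * (qstar (fun j => κ * ρ ^ j) x : ℝ) := by
    intro x hx
    rw [hKdef]; exact qstar_lower hκ hρ0 hρ1 x hx
  have hqone : ∀ x : ℝ, 0 < x → (1 : ℝ) ≤ (qstar (fun j => κ * ρ ^ j) x : ℝ) := by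
    intro x hx
    exact_mod_cast (qstar_mem hκ hρ0 hρ1 x hx).1
  constructor
  · refine ⟨K⁻¹, C, by positivity, ?_, ?_⟩
    · calc K⁻¹ ≤ 1 := by rw [inv_le_one_iff₀]; right; exact hK1
        _ ≤ C := hC1
    · intro x hx
      refine ⟨?_, hup x hx⟩
      have := hlo x hx
      rw [inv_mul_le_iff₀ hK0]
      linarith
  · -- Part 2
    obtain ⟨T, hTdef⟩ : ∃ T : ℝ, T = 4 * C + 8 := ⟨_, rfl⟩
    have hT0 : 0 < T := by rw [hTdef]; linarith
    obtain ⟨ε, hεdef⟩ : ∃ ε : ℝ, ε = Real.exp (-T) := ⟨_, rfl⟩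
    have hε0 : 0 < ε := by rw [hεdef]; exact Real.exp_pos _
    have hε1 : ε ≤ 1 := by rw [hεdef, Real.exp_le_one_iff]; linarith
    -- key numeric fact: C * (T + 2) * ε ≤ 1
    have hnum : C * (T + 2) * ε ≤ 1 := by
      have hexpT : T ^ 2 / 4 ≤ Real.exp T := by
        have h1 : T / 2 + 1 ≤ Real.exp (T / 2) := Real.add_one_le_exp (T / 2)
        have h3 : Real.exp (T / 2) * Real.exp (T / 2) = Real.exp T := by
          rw [← Real.exp_add]; ring_nf
        nlinarith [hT0, Real.exp_pos (T / 2)]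
      have hCT : C * (T + 2) ≤ T ^ 2 / 4 := by
        rw [hTdef]
        have h : (4 * C + 8) ^ 2 / 4 - C * (4 * C + 8 + 2) = 6 * C + 16 := by ring
        linarith
      have heq1 : ε * Real.exp T = 1 := by
        rw [hεdef, ← Real.exp_add]; simp
      have h4 : C * (T + 2) * ε ≤ Real.exp T * ε :=
        mul_le_mul_of_nonneg_right (hCT.trans hexpT) hε0.le
      nlinarith [h4, heq1]
    refine ⟨ε, K, hε0, le_trans hε1 hK1, ?_⟩
    intro δ hδ
    obtain ⟨L, hLdef⟩ : ∃ L : ℝ, L = max (Real.log δ⁻¹) 1 := ⟨_, rfl⟩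
    have hLeq : Real.log (max δ⁻¹ (Real.exp 1)) = L := by
      rw [hLdef]
      rcases le_total δ⁻¹ (Real.exp 1) with h | h
      · rw [max_eq_right h, Real.log_exp, max_eq_right]
        calc Real.log δ⁻¹ ≤ Real.log (Real.exp 1) := Real.log_le_log (by positivity) h
          _ = 1 := Real.log_exp 1
      · rw [max_eq_left h, max_eq_left]
        calc (1:ℝ) = Real.log (Real.exp 1) := (Real.log_exp 1).symm
          _ ≤ Real.log δ⁻¹ := Real.log_le_log (Real.exp_pos 1) h
    have hL1 : 1 ≤ L := hLdef ▸ le_max_right _ _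
    have hL0 : 0 < L := by linarith
    rw [hLeq]
    have hSbdd : ∀ s ∈ {r : ℝ | 0 < r ∧ (qstar (fun j => κ * ρ ^ j) r : ℝ) * r ≤ δ}, s ≤ δ := by
      rintro s ⟨hs0, hsq⟩
      nlinarith [hqone s hs0]
    have hbdd : BddAbove {r : ℝ | 0 < r ∧ (qstar (fun j => κ * ρ ^ j) r : ℝ) * r ≤ δ} :=
      ⟨δ, fun s hs => hSbdd s hs⟩
    obtain ⟨r₀, hr₀def⟩ : ∃ r₀ : ℝ, r₀ = ε * (δ / L) := ⟨_, rfl⟩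
    have hr₀0 : 0 < r₀ := by rw [hr₀def]; positivity
    have hr₀mem : r₀ ∈ {r : ℝ | 0 < r ∧ (qstar (fun j => κ * ρ ^ j) r : ℝ) * r ≤ δ} := by
      refine ⟨hr₀0, ?_⟩
      have hMr : max (Real.log r₀⁻¹) 1 ≤ (T + 2) * L := by
        have hlogr : Real.log r₀⁻¹ = T - Real.log δ + Real.log L := by
          rw [Real.log_inv, hr₀def, Real.log_mul (ne_of_gt hε0) (by positivity),
            Real.log_div (ne_of_gt hδ) (ne_of_gt hL0), hεdef, Real.log_exp]
          ring
        have h1 : -Real.log δ ≤ L := by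
          have : Real.log δ⁻¹ ≤ L := hLdef ▸ le_max_left _ _
          rw [Real.log_inv] at this; linarith
        have h2 : Real.log L ≤ L := by
          have := Real.log_le_sub_one_of_pos hL0; linarith
        have h3 : T ≤ T * L := by nlinarith
        have h4 : Real.log r₀⁻¹ ≤ (T + 2) * L := by rw [hlogr]; nlinarith
        have h5 : (1 : ℝ) ≤ (T + 2) * L := by nlinarith
        exact max_le h4 h5
      have hq : (qstar (fun j => κ * ρ ^ j) r₀ : ℝ) ≤ C * ((T + 2) * L) :=
        (hup r₀ hr₀0).trans (mul_le_mul_of_nonneg_left hMr hC0.le)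
      calc (qstar (fun j => κ * ρ ^ j) r₀ : ℝ) * r₀ ≤ C * ((T + 2) * L) * r₀ :=
            mul_le_mul_of_nonneg_right hq hr₀0.le
        _ = C * (T + 2) * ε * δ := by rw [hr₀def]; field_simp
        _ ≤ 1 * δ := mul_le_mul_of_nonneg_right hnum hδ.le
        _ = δ := one_mul δ
    have hlower : ε * (δ / L) ≤ rFn (fun j => κ * ρ ^ j) δ := by
      rw [← hr₀def]
      exact le_csSup hbdd hr₀mem
    have hupper : rFn (fun j => κ * ρ ^ j) δ ≤ K * (δ / L) := by
      apply Real.sSup_le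
      · rintro s ⟨hs0, hsq⟩
        have hq1s : (1 : ℝ) ≤ (qstar (fun j => κ * ρ ^ j) s : ℝ) := hqone s hs0
        have hsδ : s ≤ δ := by nlinarith
        have hinv : δ⁻¹ ≤ s⁻¹ := inv_anti₀ hs0 hsδ
        have hMs : L ≤ max (Real.log s⁻¹) 1 := by
          rw [hLdef]
          exact max_le_max (Real.log_le_log (by positivity) hinv) le_rfl
        have h1 : max (Real.log s⁻¹) 1 ≤ K * (qstar (fun j => κ * ρ ^ j) s : ℝ) := hlo s hs0
        have h2 : L * s ≤ K * δ := by nlinarith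
        calc s = L * s / L := by field_simp
          _ ≤ K * δ / L := (div_le_div_iff_of_pos_right hL0).mpr h2
          _ = K * (δ / L) := by ring
      · positivity
    exact ⟨hlower, hupper⟩
end

section
/- Lemma 3.3(i) (well-definedness and elementary properties of r): For every x > 0 the set {q ∈ ℕ, q ≥ 1 : β(q) ≤ q·x} is nonempty (so q*(x) is well-defined); for every δ > 0 the set {r > 0 : q*(r)·r ≤ δ} is nonempty, bounded above, and contains its supremum, so r(δ) = max{r > 0 : q*(r)·r ≤ δ} is well-defined; moreover, for every a > 0 one has r(a)/2 ≥ r(a/2) and r(a) ≤ a. -/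
/-- Lemma 3.3(i): `q*` and `r` are well defined (the defining set of `q*` is nonempty;
the defining set of `r` is nonempty, bounded above and contains its supremum), and
`r(a)/2 ≥ r(a/2)` and `r(a) ≤ a` for every `a > 0`. -/
theorem qstar_rFn_well_defined (Δ : ℕ → ℝ)
    (hΔnn : ∀ k, 0 ≤ Δ k) (hΔmono : ∀ k, Δ (k + 1) ≤ Δ k) (hΔsum : Summable Δ) :
    (∀ x : ℝ, 0 < x → {q : ℕ | 1 ≤ q ∧ betaFn Δ q ≤ (q : ℝ) * x}.Nonempty) ∧
    (∀ δ : ℝ, 0 < δ →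
      {r : ℝ | 0 < r ∧ (qstar Δ r : ℝ) * r ≤ δ}.Nonempty ∧
      BddAbove {r : ℝ | 0 < r ∧ (qstar Δ r : ℝ) * r ≤ δ} ∧
      rFn Δ δ ∈ {r : ℝ | 0 < r ∧ (qstar Δ r : ℝ) * r ≤ δ}) ∧
    (∀ a : ℝ, 0 < a → rFn Δ (a / 2) ≤ rFn Δ a / 2 ∧ rFn Δ a ≤ a) := by
  -- β tends to 0
  have hbeta_tendsto : Filter.Tendsto (betaFn Δ) Filter.atTop (nhds 0) :=
    tendsto_sum_nat_add Δ
  -- Part 1: nonemptiness of the q*-defining set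
  have hT : ∀ x : ℝ, 0 < x → {q : ℕ | 1 ≤ q ∧ betaFn Δ q ≤ (q : ℝ) * x}.Nonempty := by
    intro x hx
    have hev : ∀ᶠ q in Filter.atTop, betaFn Δ q < x :=
      hbeta_tendsto.eventually_lt_const hx
    obtain ⟨Q, hQβ, hQ1⟩ := (hev.and (Filter.eventually_ge_atTop 1)).exists
    refine ⟨Q, hQ1, ?_⟩
    have h1Q : (1 : ℝ) ≤ (Q : ℝ) := by exact_mod_cast hQ1
    calc betaFn Δ Q ≤ x := hQβ.le
      _ ≤ (Q : ℝ) * x := le_mul_of_one_le_left hx.le h1Q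
  -- basic properties of q*
  have hq_mem : ∀ x : ℝ, 0 < x →
      1 ≤ qstar Δ x ∧ betaFn Δ (qstar Δ x) ≤ (qstar Δ x : ℝ) * x := by
    intro x hx
    exact Nat.sInf_mem (hT x hx)
  have hq_anti : ∀ x y : ℝ, 0 < x → x ≤ y → qstar Δ y ≤ qstar Δ x := by
    intro x y hx hxy
    apply Nat.sInf_le
    refine ⟨(hq_mem x hx).1, ?_⟩
    calc betaFn Δ (qstar Δ x) ≤ (qstar Δ x : ℝ) * x := (hq_mem x hx).2
      _ ≤ (qstar Δ x : ℝ) * y := by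
          exact mul_le_mul_of_nonneg_left hxy (Nat.cast_nonneg _)
  have hq_pos : ∀ x : ℝ, 0 < x → (1 : ℝ) ≤ (qstar Δ x : ℝ) := by
    intro x hx; exact_mod_cast (hq_mem x hx).1
  -- properties of the set S δ
  have hS_ne : ∀ δ : ℝ, 0 < δ → {r : ℝ | 0 < r ∧ (qstar Δ r : ℝ) * r ≤ δ}.Nonempty := by
    intro δ hδ
    have hev : ∀ᶠ q in Filter.atTop, betaFn Δ q < δ :=
      hbeta_tendsto.eventually_lt_const hδ
    obtain ⟨Q, hQβ, hQ1⟩ := (hev.and (Filter.eventually_ge_atTop 1)).exists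
    have hQpos : (0 : ℝ) < (Q : ℝ) := by exact_mod_cast Nat.lt_of_lt_of_le Nat.zero_lt_one hQ1
    set r := δ / Q with hr
    have hrpos : 0 < r := div_pos hδ hQpos
    have hQr : (Q : ℝ) * r = δ := by
      rw [hr]; field_simp
    have hmem : Q ∈ {q : ℕ | 1 ≤ q ∧ betaFn Δ q ≤ (q : ℝ) * r} := by
      refine ⟨hQ1, ?_⟩
      rw [hQr]; exact hQβ.le
    have hq_le : qstar Δ r ≤ Q := Nat.sInf_le hmem
    refine ⟨r, hrpos, ?_⟩
    calc (qstar Δ r : ℝ) * r ≤ (Q : ℝ) * r := by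
          exact mul_le_mul_of_nonneg_right (by exact_mod_cast hq_le) hrpos.le
      _ = δ := hQr
  have hS_le : ∀ δ : ℝ, 0 < δ → ∀ r ∈ {r : ℝ | 0 < r ∧ (qstar Δ r : ℝ) * r ≤ δ}, r ≤ δ := by
    intro δ hδ r hr
    calc r ≤ (qstar Δ r : ℝ) * r := le_mul_of_one_le_left hr.1.le (hq_pos r hr.1)
      _ ≤ δ := hr.2
  have hS_bdd : ∀ δ : ℝ, 0 < δ → BddAbove {r : ℝ | 0 < r ∧ (qstar Δ r : ℝ) * r ≤ δ} := by
    intro δ hδ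
    exact ⟨δ, fun r hr => hS_le δ hδ r hr⟩
  -- the supremum belongs to the set
  have hS_mem : ∀ δ : ℝ, 0 < δ →
      rFn Δ δ ∈ {r : ℝ | 0 < r ∧ (qstar Δ r : ℝ) * r ≤ δ} := by
    intro δ hδ
    obtain ⟨r₀, hr₀⟩ := hS_ne δ hδ
    have hRge : r₀ ≤ rFn Δ δ := le_csSup (hS_bdd δ hδ) hr₀
    have hRpos : 0 < rFn Δ δ := lt_of_lt_of_le hr₀.1 hRge
    have hqRpos : (0 : ℝ) < (qstar Δ (rFn Δ δ) : ℝ) :=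
      lt_of_lt_of_le one_pos (hq_pos _ hRpos)
    have key : ∀ r ∈ {r : ℝ | 0 < r ∧ (qstar Δ r : ℝ) * r ≤ δ},
        r ≤ δ / (qstar Δ (rFn Δ δ) : ℝ) := by
      intro r hr
      have hrR : r ≤ rFn Δ δ := le_csSup (hS_bdd δ hδ) hr
      have h1 : qstar Δ (rFn Δ δ) ≤ qstar Δ r := hq_anti r _ hr.1 hrR
      have h2 : (qstar Δ (rFn Δ δ) : ℝ) * r ≤ (qstar Δ r : ℝ) * r :=
        mul_le_mul_of_nonneg_right (by exact_mod_cast h1) hr.1.le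
      rw [le_div_iff₀ hqRpos, mul_comm]
      exact h2.trans hr.2
    have hRle : rFn Δ δ ≤ δ / (qstar Δ (rFn Δ δ) : ℝ) :=
      csSup_le (hS_ne δ hδ) key
    refine ⟨hRpos, ?_⟩
    rw [le_div_iff₀ hqRpos, mul_comm] at hRle
    exact hRle
  refine ⟨hT, fun δ hδ => ⟨hS_ne δ hδ, hS_bdd δ hδ, hS_mem δ hδ⟩, ?_⟩
  intro a ha
  have ha2 : 0 < a / 2 := by linarith
  constructor
  · -- rFn (a/2) ≤ rFn a / 2
    apply csSup_le (hS_ne _ ha2)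
    intro r hr
    have h2r : (2 * r) ∈ {r : ℝ | 0 < r ∧ (qstar Δ r : ℝ) * r ≤ a} := by
      have h2rpos : 0 < 2 * r := by linarith [hr.1]
      refine ⟨h2rpos, ?_⟩
      have h1 : qstar Δ (2 * r) ≤ qstar Δ r := hq_anti r (2 * r) hr.1 (by linarith [hr.1])
      have h2 : (qstar Δ (2 * r) : ℝ) * (2 * r) ≤ (qstar Δ r : ℝ) * (2 * r) :=
        mul_le_mul_of_nonneg_right (by exact_mod_cast h1) h2rpos.le
      have h3 : (qstar Δ r : ℝ) * r ≤ a / 2 := hr.2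
      nlinarith
    have : 2 * r ≤ rFn Δ a := le_csSup (hS_bdd a ha) h2r
    linarith
  · -- rFn a ≤ a
    have hm := hS_mem a ha
    calc rFn Δ a ≤ (qstar Δ (rFn Δ a) : ℝ) * rFn Δ a :=
          le_mul_of_one_le_left hm.1.le (hq_pos _ hm.1)
      _ ≤ a := hm.2
end

section
/- L²-norm bound under a V-bound: Let 𝔻 > 0 and δ > 0, and let s ≥ 0 satisfy s + Σ_{j=1}^∞ min{s, 𝔻·Δ(j)} ≤ δ. Then s ≤ 𝔻·r(δ/𝔻). In particular, for any measurable f with V(f) ≤ δ one has ‖f‖₂,ₙ ≤ 𝔻·r(δ/𝔻). -/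
open MeasureTheory

/-- The empirical `L^2`-type norm `‖f‖_{2,n}`. -/
noncomputable def norm2n {Ω S : Type*} [MeasurableSpace Ω] [MeasurableSpace S]
    (P : Measure Ω) (n : ℕ) (Z : ℕ → Ω → S) (f : S → ℝ → ℝ) : ℝ :=
  Real.sqrt ((1 / (n : ℝ)) *
    ∑ i ∈ Finset.Icc 1 n, ∫ ω, (f (Z i ω) ((i : ℝ) / (n : ℝ))) ^ 2 ∂P)

/-- The seminorm `V(f) = ‖f‖_{2,n} + ∑_{k=1}^∞ min{‖f‖_{2,n}, 𝔻·Δ(k)}`. -/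
noncomputable def Vnorm {Ω S : Type*} [MeasurableSpace Ω] [MeasurableSpace S]
    (P : Measure Ω) (n : ℕ) (Z : ℕ → Ω → S) (Δ : ℕ → ℝ) (D : ℝ) (f : S → ℝ → ℝ) : ℝ :=
  norm2n P n Z f + ∑' k : ℕ, min (norm2n P n Z f) (D * Δ (k + 1))

lemma qset_nonempty_s8 (Δ : ℕ → ℝ) (hΔnn : ∀ k, 0 ≤ Δ k) (hΔsum : Summable Δ)
    {x : ℝ} (hx : 0 < x) :
    {q : ℕ | 1 ≤ q ∧ betaFn Δ q ≤ (q : ℝ) * x}.Nonempty := by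
  set T := ∑' j, Δ j with hT
  have hT0 : 0 ≤ T := tsum_nonneg hΔnn
  obtain ⟨q, hq⟩ := exists_nat_ge (T / x + 1)
  have hq1 : 1 ≤ q := by
    have h0 : (0:ℝ) ≤ T / x := div_nonneg hT0 hx.le
    have : (1:ℝ) ≤ q := by linarith
    exact_mod_cast this
  refine ⟨q, hq1, ?_⟩
  have hβ : betaFn Δ q ≤ T := by
    have h := Summable.sum_add_tsum_nat_add (f := Δ) q hΔsum
    have hpart : 0 ≤ ∑ i ∈ Finset.range q, Δ i := Finset.sum_nonneg fun i _ => hΔnn i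
    simp only [betaFn]
    linarith [h]
  have h0 : (0:ℝ) ≤ T / x := div_nonneg hT0 hx.le
  have : T ≤ (q : ℝ) * x := by
    have : T / x ≤ (q:ℝ) := by linarith
    calc T = T / x * x := by field_simp
    _ ≤ (q:ℝ) * x := by nlinarith
  linarith

lemma qstar_mul_le (Δ : ℕ → ℝ) (hΔnn : ∀ k, 0 ≤ Δ k) (hΔmono : ∀ k, Δ (k + 1) ≤ Δ k)
    (hΔsum : Summable Δ) {x δ' : ℝ} (hx : 0 < x)
    (h : x + ∑' j : ℕ, min x (Δ (j + 1)) ≤ δ') :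
    (qstar Δ x : ℝ) * x ≤ δ' := by
  have hanti : Antitone Δ := antitone_nat_of_succ_le hΔmono
  have hne := qset_nonempty_s8 Δ hΔnn hΔsum hx
  have hmem := Nat.sInf_mem hne
  set q := qstar Δ x with hqdef
  have hq1 : 1 ≤ q := hmem.1
  have hsum1 : Summable (fun j => Δ (j + 1)) := (summable_nat_add_iff 1).mpr hΔsum
  have hgnn : ∀ j : ℕ, 0 ≤ min x (Δ (j + 1)) := fun j => le_min hx.le (hΔnn _)
  have hg : Summable (fun j => min x (Δ (j + 1))) :=
    Summable.of_nonneg_of_le hgnn (fun j => min_le_right _ _) hsum1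
  set S := ∑' j : ℕ, min x (Δ (j + 1)) with hS
  have hS0 : 0 ≤ S := tsum_nonneg hgnn
  rcases eq_or_lt_of_le hq1 with h1 | h2
  · rw [← h1]; push_cast; linarith
  -- q ≥ 2
  set p := q - 1 with hp
  have hp1 : 1 ≤ p := by omega
  have hqp : q = p + 1 := by omega
  have hβp : (p : ℝ) * x < betaFn Δ p := by
    have hlt : p < q := by omega
    have hnot : p ∉ {m : ℕ | 1 ≤ m ∧ betaFn Δ m ≤ (m : ℝ) * x} :=
      Nat.notMem_of_lt_sInf hlt
    simp only [Set.mem_setOf_eq, not_and, not_le] at hnot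
    exact hnot hp1
  have hkey : (p : ℝ) * x ≤ S := by
    rcases le_or_gt x (Δ p) with hc | hc
    · -- Δ(j+1) ≥ x for j < p
      have heq : ∑ j ∈ Finset.range p, min x (Δ (j + 1)) = (p : ℝ) * x := by
        have hterm : ∀ j ∈ Finset.range p, min x (Δ (j + 1)) = x := by
          intro j hj
          have hj' : j + 1 ≤ p := Finset.mem_range.mp hj
          exact min_eq_left (le_trans hc (hanti hj'))
        rw [Finset.sum_congr rfl hterm, Finset.sum_const, Finset.card_range, nsmul_eq_mul]
      rw [← heq]
      exact Summable.sum_le_tsum _ (fun j _ => hgnn j) hg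
    · -- tail from p-1 equals betaFn Δ p
      have htail : ∑' j : ℕ, min x (Δ (j + (p - 1) + 1)) = betaFn Δ p := by
        simp only [betaFn]
        congr 1
        funext j
        have hidx : j + (p - 1) + 1 = j + p := by omega
        rw [hidx, min_eq_right (le_of_lt (lt_of_le_of_lt (hanti (Nat.le_add_left p j)) hc))]
      have hsplit := Summable.sum_add_tsum_nat_add (f := fun j => min x (Δ (j + 1))) (p - 1) hg
      rw [← hS] at hsplit
      have hpart : 0 ≤ ∑ j ∈ Finset.range (p - 1), min x (Δ (j + 1)) :=
        Finset.sum_nonneg fun j _ => hgnn j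
      have h3 : betaFn Δ p ≤ S := by
        rw [← htail]
        linarith [hsplit]
      linarith
  have hc : (q : ℝ) = (p : ℝ) + 1 := by exact_mod_cast congrArg Nat.cast hqp
  rw [hc]
  nlinarith

lemma le_rFn (Δ : ℕ → ℝ) (hΔnn : ∀ k, 0 ≤ Δ k) (hΔsum : Summable Δ)
    {x δ' : ℝ} (hx : 0 < x) (hq : (qstar Δ x : ℝ) * x ≤ δ') : x ≤ rFn Δ δ' := by
  apply le_csSup
  · refine ⟨δ', fun r hr => ?_⟩
    obtain ⟨hr0, hrq⟩ := hr
    have h1 : (1 : ℝ) ≤ (qstar Δ r : ℝ) := by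
      exact_mod_cast (Nat.sInf_mem (qset_nonempty_s8 Δ hΔnn hΔsum hr0)).1
    nlinarith
  · exact ⟨hx, hq⟩

/-- `L²`-norm bound under a `V`-bound: if `s ≥ 0` satisfies
`s + ∑_{j=1}^∞ min{s, 𝔻·Δ(j)} ≤ δ` then `s ≤ 𝔻·r(δ/𝔻)`; in particular, any measurable
`f` with `V(f) ≤ δ` satisfies `‖f‖_{2,n} ≤ 𝔻·r(δ/𝔻)`. -/
theorem l2norm_bound_under_V (Δ : ℕ → ℝ)
    (hΔnn : ∀ k, 0 ≤ Δ k) (hΔmono : ∀ k, Δ (k + 1) ≤ Δ k) (hΔsum : Summable Δ)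
    (D δ : ℝ) (hD : 0 < D) (hδ : 0 < δ) :
    (∀ s : ℝ, 0 ≤ s → s + (∑' j : ℕ, min s (D * Δ (j + 1))) ≤ δ →
      s ≤ D * rFn Δ (δ / D)) ∧
    (∀ (Ω S : Type) [MeasurableSpace Ω] [MeasurableSpace S]
      (P : Measure Ω) [IsProbabilityMeasure P]
      (n : ℕ), 1 ≤ n → ∀ (Z : ℕ → Ω → S) (f : S → ℝ → ℝ),
      Measurable (Function.uncurry f) →
      Vnorm P n Z Δ D f ≤ δ → norm2n P n Z f ≤ D * rFn Δ (δ / D)) := by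
  have main : ∀ s : ℝ, 0 ≤ s → s + (∑' j : ℕ, min s (D * Δ (j + 1))) ≤ δ →
      s ≤ D * rFn Δ (δ / D) := by
    intro s hs h
    rcases eq_or_lt_of_le hs with h0 | h0
    · have hr : 0 ≤ rFn Δ (δ / D) :=
        Real.sSup_nonneg (fun r hr => hr.1.le)
      rw [← h0]
      positivity
    · set x := s / D with hxdef
      have hx : 0 < x := div_pos h0 hD
      have hDx : D * x = s := by rw [hxdef, mul_comm, div_mul_cancel₀ _ hD.ne']
      have hmin : ∀ j : ℕ, min s (D * Δ (j + 1)) = D * min x (Δ (j + 1)) := by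
        intro j
        rw [mul_min_of_nonneg _ _ hD.le, hDx]
      have hsum_eq : ∑' j : ℕ, min s (D * Δ (j + 1)) = D * ∑' j : ℕ, min x (Δ (j + 1)) := by
        rw [← tsum_mul_left]
        exact tsum_congr hmin
      have hcond : x + ∑' j : ℕ, min x (Δ (j + 1)) ≤ δ / D := by
        rw [le_div_iff₀ hD]
        rw [hsum_eq] at h
        nlinarith
      have hq := qstar_mul_le Δ hΔnn hΔmono hΔsum hx hcond
      have hle := le_rFn Δ hΔnn hΔsum hx hq
      calc s = D * x := hDx.symm
      _ ≤ D * rFn Δ (δ / D) := by nlinarith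
  refine ⟨main, ?_⟩
  intro Ω S _ _ P _ n hn Z f hf hV
  exact main _ (Real.sqrt_nonneg _) hV
end

section
/- Submultiplicativity transfers from β to q*: Suppose there exists C_β > 0 such that β(q₁·q₂) ≤ C_β·β(q₁)·β(q₂) for all integers q₁, q₂ ≥ 1. Then for all x₁, x₂ > 0 one has q*(C_β·x₁·x₂) ≤ q*(x₁)·q*(x₂). -/
/-- Submultiplicativity transfers from `β` to `q*`: if
`β(q₁·q₂) ≤ C_β·β(q₁)·β(q₂)` for all `q₁, q₂ ≥ 1`, then
`q*(C_β·x₁·x₂) ≤ q*(x₁)·q*(x₂)` for all `x₁, x₂ > 0`. -/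
theorem qstar_submultiplicative (Δ : ℕ → ℝ)
    (hΔnn : ∀ k, 0 ≤ Δ k) (hΔmono : ∀ k, Δ (k + 1) ≤ Δ k) (hΔsum : Summable Δ)
    (Cβ : ℝ) (hCβ : 0 < Cβ)
    (hsub : ∀ q1 q2 : ℕ, 1 ≤ q1 → 1 ≤ q2 →
      betaFn Δ (q1 * q2) ≤ Cβ * betaFn Δ q1 * betaFn Δ q2) :
    ∀ x1 x2 : ℝ, 0 < x1 → 0 < x2 →
      qstar Δ (Cβ * x1 * x2) ≤ qstar Δ x1 * qstar Δ x2 := by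
  intro x1 x2 hx1 hx2
  have hβnn : ∀ q, 0 ≤ betaFn Δ q := fun q => tsum_nonneg (fun j => hΔnn _)
  have hanti : Antitone Δ := antitone_nat_of_succ_le hΔmono
  have hsumq : ∀ q : ℕ, Summable (fun j => Δ (j + q)) := fun q =>
    (summable_nat_add_iff q).mpr hΔsum
  have hβmono : ∀ q q' : ℕ, q ≤ q' → betaFn Δ q' ≤ betaFn Δ q := fun q q' h =>
    Summable.tsum_le_tsum (fun j => hanti (by omega)) (hsumq q') (hsumq q)
  have hne : ∀ x : ℝ, 0 < x → {q : ℕ | 1 ≤ q ∧ betaFn Δ q ≤ (q : ℝ) * x}.Nonempty := by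
    intro x hx
    obtain ⟨n, hn⟩ := exists_nat_gt (betaFn Δ 1 / x)
    refine ⟨max 1 n, le_max_left _ _, ?_⟩
    have h1 : betaFn Δ (max 1 n) ≤ betaFn Δ 1 := hβmono 1 _ (le_max_left _ _)
    have h2 : betaFn Δ 1 ≤ (n : ℝ) * x := by
      rw [div_lt_iff₀ hx] at hn; linarith
    have h3 : ((n : ℕ) : ℝ) ≤ ((max 1 n : ℕ) : ℝ) := by exact_mod_cast le_max_right 1 n
    nlinarith
  have h1 := Nat.sInf_mem (hne x1 hx1)
  have h2 := Nat.sInf_mem (hne x2 hx2)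
  set q1 := qstar Δ x1 with hq1def
  set q2 := qstar Δ x2 with hq2def
  obtain ⟨hq1, hb1⟩ := h1
  obtain ⟨hq2, hb2⟩ := h2
  have hq1 : 1 ≤ q1 := hq1
  have hq2 : 1 ≤ q2 := hq2
  have hb1 : betaFn Δ q1 ≤ (q1 : ℝ) * x1 := hb1
  have hb2 : betaFn Δ q2 ≤ (q2 : ℝ) * x2 := hb2
  apply Nat.sInf_le
  refine ⟨Nat.one_le_iff_ne_zero.mpr (by positivity), ?_⟩
  have hchain := hsub q1 q2 hq1 hq2
  have hc1 : ((q1 * q2 : ℕ) : ℝ) = (q1 : ℝ) * (q2 : ℝ) := by push_cast; ring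
  rw [hc1]
  have hb1' := hβnn q1
  have hb2' := hβnn q2
  have hq1' : (0:ℝ) < q1 := by exact_mod_cast hq1
  have hq2' : (0:ℝ) < q2 := by exact_mod_cast hq2
  have key : betaFn Δ q1 * betaFn Δ q2 ≤ ((q1:ℝ)*x1) * ((q2:ℝ)*x2) :=
    mul_le_mul hb1 hb2 hb2' (by positivity)
  have key2 : Cβ * (betaFn Δ q1 * betaFn Δ q2) ≤ Cβ * (((q1:ℝ)*x1) * ((q2:ℝ)*x2)) :=
    mul_le_mul_of_nonneg_left key hCβ.le
  nlinarith [key2, hchain]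
end

section
/- Truncation lemma, part (i): Let m > 0 and x₁, x₂, x₃ ∈ ℝ. If |x₁| + |x₂| ≤ m, then |φ_m^∧(x₁ + x₂ + x₃) − φ_m^∧(x₁) − φ_m^∧(x₂)| ≤ min{|x₃|, 2m}. -/
/-- The truncation map `φ_m^∧(x) = (x ∨ (−m)) ∧ m`. -/
def phiTrunc (m x : ℝ) : ℝ := min (max x (-m)) m

lemma phiTrunc_eq_self {m x : ℝ} (h : |x| ≤ m) : phiTrunc m x = x := by
  obtain ⟨h1, h2⟩ := abs_le.mp h
  simp [phiTrunc, max_eq_left h1, min_eq_left h2]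

lemma phiTrunc_lipschitz (m a b : ℝ) : |phiTrunc m a - phiTrunc m b| ≤ |a - b| := by
  unfold phiTrunc
  calc |min (max a (-m)) m - min (max b (-m)) m|
      ≤ max |max a (-m) - max b (-m)| |m - m| := abs_min_sub_min_le_max _ _ _ _
    _ = |max a (-m) - max b (-m)| := by simp [abs_nonneg]
    _ ≤ |a - b| := abs_max_sub_max_le_abs _ _ _

lemma abs_phiTrunc_le (m x : ℝ) (hm : 0 ≤ m) : |phiTrunc m x| ≤ m := by
  unfold phiTrunc
  rw [abs_le]
  constructor
  · exact le_min (le_max_right _ _) (by linarith)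
  · exact min_le_right _ _

/-- Truncation lemma, part (i): if `|x₁| + |x₂| ≤ m`, then
`|φ_m^∧(x₁+x₂+x₃) − φ_m^∧(x₁) − φ_m^∧(x₂)| ≤ min{|x₃|, 2m}`. -/
theorem truncation_lemma_i (m x1 x2 x3 : ℝ) (hm : 0 < m) (h : |x1| + |x2| ≤ m) :
    |phiTrunc m (x1 + x2 + x3) - phiTrunc m x1 - phiTrunc m x2| ≤ min |x3| (2 * m) := by
  have h1 : |x1| ≤ m := by linarith [abs_nonneg x2]
  have h2 : |x2| ≤ m := by linarith [abs_nonneg x1]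
  have h12 : |x1 + x2| ≤ m := (abs_add_le x1 x2).trans h
  rw [phiTrunc_eq_self h1, phiTrunc_eq_self h2]
  refine le_min ?_ ?_
  · have := phiTrunc_lipschitz m (x1 + x2 + x3) (x1 + x2)
    rw [phiTrunc_eq_self h12] at this
    have e : x1 + x2 + x3 - (x1 + x2) = x3 := by ring
    rw [e] at this
    calc |phiTrunc m (x1 + x2 + x3) - x1 - x2|
        = |phiTrunc m (x1 + x2 + x3) - (x1 + x2)| := by ring_nf
      _ ≤ |x3| := this
  · have ha := abs_phiTrunc_le m (x1 + x2 + x3) hm.le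
    have hb := abs_le.mp h12
    have hc := abs_le.mp ha
    rw [abs_le]
    constructor <;> linarith
end

section
/- Maximal inequality for martingale parts with restricted conditional variance: There exists a universal constant c > 0 with the following property. Let (Ω, 𝒜, P) be a probability space with a filtration 𝒢₀ ⊆ 𝒢₁ ⊆ … ⊆ 𝒢ₙ ⊆ 𝒜, let F be a nonempty finite index set, and let M, R > 0. For each f ∈ F let ξ₁(f), …, ξₙ(f) be real random variables such that ξ_i(f) is 𝒢_i-measurable and |ξ_i(f)| ≤ M almost surely. Define G_n^{(1)}(f) = n^{−1/2}·Σ_{i=1}^n (ξ_i(f) − E[ξ_i(f) | 𝒢_{i−1}]) and R_n(f)² = (1/n)·Σ_{i=1}^n E[ξ_i(f)² | 𝒢_{i−1}]. Then E[max_{f ∈ F} |G_n^{(1)}(f)|·1_{{R_n(f)² ≤ R²}}] ≤ c·(R·√H + M·H/√n), where H = max{1, log|F|}. -/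
open MeasureTheory

lemma exp_quad {x : ℝ} (hx : |x| ≤ 1) : Real.exp x ≤ 1 + x + x ^ 2 := by
  have h := Real.exp_bound hx (by norm_num : 0 < 2)
  have hsum : ∑ i ∈ Finset.range 2, x ^ i / (Nat.factorial i) = 1 + x := by
    simp [Finset.sum_range_succ]
  rw [hsum, sq_abs] at h
  have hc : ((Nat.succ 2 : ℕ) : ℝ) / ((Nat.factorial 2 : ℕ) * (2:ℕ)) = 3 / 4 := by
    norm_num [Nat.factorial]
  rw [hc] at h
  have habs := (abs_sub_le_iff.mp h).1
  nlinarith [sq_nonneg x]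

lemma integrable_bdd {Ω : Type} {m0 : MeasurableSpace Ω} {P : Measure Ω} [IsFiniteMeasure P]
    {f : Ω → ℝ} {C : ℝ} (hf : AEStronglyMeasurable f P) (h : ∀ᵐ ω ∂P, |f ω| ≤ C) :
    Integrable f P :=
  (integrable_const C).mono' hf (by simpa [Real.norm_eq_abs] using h)

lemma condexp_step_le_one {Ω : Type} {m m0 : MeasurableSpace Ω} (hm : m ≤ m0)
    {P : Measure Ω} [IsProbabilityMeasure P]
    {ξ : Ω → ℝ} (hξ : Measurable ξ) {M : ℝ} (hM : 0 < M)
    (hb : ∀ᵐ ω ∂P, |ξ ω| ≤ M) {t : ℝ} (ht : |t| * (2 * M) ≤ 1) :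
    ∀ᵐ ω ∂P, (P[fun ω' => Real.exp (t * (ξ ω' - (P[ξ|m]) ω')
        - t ^ 2 * (P[fun ω'' => ξ ω'' ^ 2|m]) ω')|m]) ω ≤ 1 := by
  have hMnn : (0:ℝ) ≤ M := hM.le
  have hξsm : AEStronglyMeasurable ξ P := hξ.aestronglyMeasurable
  have hξi : Integrable ξ P := integrable_bdd hξsm hb
  have hb2 : ∀ᵐ ω ∂P, |ξ ω ^ 2| ≤ M ^ 2 := by
    filter_upwards [hb] with ω h
    simpa [abs_pow] using pow_le_pow_left₀ (abs_nonneg _) h 2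
  have hξ2i : Integrable (fun ω => ξ ω ^ 2) P :=
    integrable_bdd (hξ.pow_const 2).aestronglyMeasurable hb2
  have hμb : ∀ᵐ ω ∂P, |(P[ξ|m]) ω| ≤ M := by
    have := ae_bdd_condExp_of_ae_bdd (m := m) (μ := P) (R := ⟨M, hM.le⟩) (f := ξ)
      (by exact hb)
    exact this
  have hσb : ∀ᵐ ω ∂P, |(P[fun ω' => ξ ω' ^ 2|m]) ω| ≤ M ^ 2 := by
    have := ae_bdd_condExp_of_ae_bdd (m := m) (μ := P) (R := ⟨M ^ 2, by positivity⟩)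
      (f := fun ω' => ξ ω' ^ 2) (by exact hb2)
    exact this
  have hμsm : AEStronglyMeasurable (P[ξ|m]) P :=
    (stronglyMeasurable_condExp.mono hm).aestronglyMeasurable
  -- X
  set X : Ω → ℝ := fun ω => ξ ω - (P[ξ|m]) ω with hXdef
  have hXsm : AEStronglyMeasurable X P := hξsm.sub hμsm
  have hXb : ∀ᵐ ω ∂P, |X ω| ≤ 2 * M := by
    filter_upwards [hb, hμb] with ω h1 h2
    calc |X ω| ≤ |ξ ω| + |(P[ξ|m]) ω| := abs_sub _ _
    _ ≤ 2 * M := by linarith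
  have hXi : Integrable X P := hξi.sub integrable_condExp
  have hX2sm : AEStronglyMeasurable (fun ω => X ω ^ 2) P := by
    simp only [pow_two]; exact hXsm.mul hXsm
  have hX2b : ∀ᵐ ω ∂P, |X ω ^ 2| ≤ (2 * M) ^ 2 := by
    filter_upwards [hXb] with ω h
    simpa [abs_pow] using pow_le_pow_left₀ (abs_nonneg _) h 2
  have hX2i : Integrable (fun ω => X ω ^ 2) P := integrable_bdd hX2sm hX2b
  -- exp (t X) integrable
  have htX1 : ∀ᵐ ω ∂P, |t * X ω| ≤ 1 := by
    filter_upwards [hXb] with ω h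
    calc |t * X ω| = |t| * |X ω| := abs_mul _ _
    _ ≤ |t| * (2 * M) := by
        exact mul_le_mul_of_nonneg_left h (abs_nonneg t)
    _ ≤ 1 := ht
  have hexpsm : AEStronglyMeasurable (fun ω => Real.exp (t * X ω)) P :=
    (Real.continuous_exp.comp_aestronglyMeasurable (hXsm.const_mul t))
  have hexpb : ∀ᵐ ω ∂P, |Real.exp (t * X ω)| ≤ Real.exp 1 := by
    filter_upwards [htX1] with ω h
    rw [abs_of_pos (Real.exp_pos _)]
    exact Real.exp_le_exp.2 ((le_abs_self _).trans h)
  have hexpi : Integrable (fun ω => Real.exp (t * X ω)) P := integrable_bdd hexpsm hexpb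
  -- quadratic bound
  have hptwise : ∀ᵐ ω ∂P, Real.exp (t * X ω) ≤ 1 + t * X ω + t ^ 2 * X ω ^ 2 := by
    filter_upwards [htX1] with ω h
    have := exp_quad h
    calc Real.exp (t * X ω) ≤ 1 + t * X ω + (t * X ω) ^ 2 := this
    _ = 1 + t * X ω + t ^ 2 * X ω ^ 2 := by ring
  have hi1 : Integrable (fun ω => 1 + t * X ω) P :=
    (integrable_const 1).add (hXi.const_mul t)
  have hi2 : Integrable (fun ω => t ^ 2 * X ω ^ 2) P := hX2i.const_mul _
  have hquadi : Integrable (fun ω => 1 + t * X ω + t ^ 2 * X ω ^ 2) P := hi1.add hi2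
  have hm1 : (P[fun ω => Real.exp (t * X ω)|m]) ≤ᵐ[P]
      (P[fun ω => 1 + t * X ω + t ^ 2 * X ω ^ 2|m]) :=
    condExp_mono hexpi hquadi hptwise
  -- condexp of the quadratic
  have hA : (P[fun ω => 1 + t * X ω + t ^ 2 * X ω ^ 2|m]) =ᵐ[P]
      (P[fun ω => 1 + t * X ω|m]) + (P[fun ω => t ^ 2 * X ω ^ 2|m]) :=
    condExp_add hi1 hi2 m
  have hB : (P[fun ω => 1 + t * X ω|m]) =ᵐ[P]
      (P[fun _ => (1:ℝ)|m]) + (P[fun ω => t * X ω|m]) :=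
    condExp_add (integrable_const 1) (hXi.const_mul t) m
  have hBc : (P[fun _ => (1:ℝ)|m]) = fun _ => (1:ℝ) := condExp_const hm 1
  have hC : (P[fun ω => t * X ω|m]) =ᵐ[P] t • (P[X|m]) := condExp_smul t X m
  have hD : (P[fun ω => t ^ 2 * X ω ^ 2|m]) =ᵐ[P] (t ^ 2) • (P[fun ω => X ω ^ 2|m]) :=
    condExp_smul (t ^ 2) (fun ω => X ω ^ 2) m
  have hE : (P[X|m]) =ᵐ[P] 0 := by
    have h1 : (P[X|m]) =ᵐ[P] (P[ξ|m]) - (P[(P[ξ|m])|m]) := condExp_sub hξi integrable_condExp m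
    have h2 : (P[(P[ξ|m])|m]) = (P[ξ|m]) :=
      condExp_of_stronglyMeasurable hm stronglyMeasurable_condExp integrable_condExp
    rw [h2] at h1
    simpa using h1
  -- conditional second moment
  have hmulsm : StronglyMeasurable[m] (fun ω => 2 * (P[ξ|m]) ω) :=
    stronglyMeasurable_condExp.const_mul 2
  have hmulb : ∀ᵐ ω ∂P, ‖2 * (P[ξ|m]) ω‖ ≤ 2 * M := by
    filter_upwards [hμb] with ω h
    rw [Real.norm_eq_abs, abs_mul, abs_two]
    linarith
  have hmuli : Integrable (fun ω => 2 * (P[ξ|m]) ω * ξ ω) P := by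
    refine integrable_bdd (C := 2 * M * M) ((hμsm.const_mul 2).mul hξsm) ?_
    filter_upwards [hμb, hb] with ω h1 h2
    rw [abs_mul, abs_mul, abs_two]
    exact mul_le_mul (by linarith) h2 (abs_nonneg _) (by positivity)
  have hsqi : Integrable (fun ω => (P[ξ|m]) ω ^ 2) P := by
    refine integrable_bdd (C := M ^ 2) (by simp only [pow_two]; exact hμsm.mul hμsm) ?_
    filter_upwards [hμb] with ω h
    simpa [abs_pow] using pow_le_pow_left₀ (abs_nonneg _) h 2
  have hFmul : (P[fun ω => (fun ω' => 2 * (P[ξ|m]) ω') ω * ξ ω|m]) =ᵐ[P]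
      (fun ω' => 2 * (P[ξ|m]) ω') * (P[ξ|m]) :=
    condExp_stronglyMeasurable_mul_of_bound hm hmulsm hξi (2 * M) hmulb
  have hFsq : (P[fun ω => (P[ξ|m]) ω ^ 2|m]) = fun ω => (P[ξ|m]) ω ^ 2 := by
    refine condExp_of_stronglyMeasurable hm ?_ hsqi
    simp only [pow_two]; exact stronglyMeasurable_condExp.mul stronglyMeasurable_condExp
  have hfunX2 : (fun ω => X ω ^ 2)
      = fun ω => (ξ ω ^ 2 - 2 * (P[ξ|m]) ω * ξ ω) + (P[ξ|m]) ω ^ 2 := by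
    funext ω
    simp only [hXdef]
    ring
  have hsub_i : Integrable (fun ω => ξ ω ^ 2 - 2 * (P[ξ|m]) ω * ξ ω) P := hξ2i.sub hmuli
  have hF1 : (P[fun ω => X ω ^ 2|m]) =ᵐ[P]
      (P[fun ω => ξ ω ^ 2 - 2 * (P[ξ|m]) ω * ξ ω|m]) + (P[fun ω => (P[ξ|m]) ω ^ 2|m]) := by
    rw [hfunX2]
    exact condExp_add hsub_i hsqi m
  have hF2 : (P[fun ω => ξ ω ^ 2 - 2 * (P[ξ|m]) ω * ξ ω|m]) =ᵐ[P]
      (P[fun ω => ξ ω ^ 2|m]) - (P[fun ω => 2 * (P[ξ|m]) ω * ξ ω|m]) :=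
    condExp_sub hξ2i hmuli m
  -- collect: P[X^2|m] ≤ σ2 a.e.
  have hX2le : ∀ᵐ ω ∂P, (P[fun ω => X ω ^ 2|m]) ω ≤ (P[fun ω' => ξ ω' ^ 2|m]) ω := by
    filter_upwards [hF1, hF2, hFmul] with ω h1 h2 h3
    have h4 : (P[fun ω => (P[ξ|m]) ω ^ 2|m]) ω = (P[ξ|m]) ω ^ 2 := by rw [hFsq]
    simp only [Pi.add_apply, Pi.sub_apply, Pi.mul_apply] at h1 h2 h3
    rw [h1, h2, h3, h4]
    nlinarith [sq_nonneg ((P[ξ|m]) ω)]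
  -- main inequality for exp(tX)
  have hmain : ∀ᵐ ω ∂P, (P[fun ω => Real.exp (t * X ω)|m]) ω
      ≤ 1 + t ^ 2 * (P[fun ω' => ξ ω' ^ 2|m]) ω := by
    filter_upwards [hm1, hA, hB, hC, hD, hE, hX2le] with ω h1 h2 h3 h4 h5 h6 h7
    simp only [Pi.add_apply, Pi.smul_apply, smul_eq_mul, Pi.zero_apply, hBc] at h1 h2 h3 h4 h5 h6
    rw [h2, h3, h4, h5, h6] at h1
    have ht2 : 0 ≤ t ^ 2 := sq_nonneg t
    nlinarith [h7]
  -- pull out exp(-t^2 σ2)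
  have hexpσsm : StronglyMeasurable[m] (fun ω => Real.exp (-(t ^ 2 * (P[fun ω' => ξ ω' ^ 2|m]) ω))) :=
    (Real.continuous_exp.comp_stronglyMeasurable
      ((stronglyMeasurable_condExp.const_mul (t ^ 2)).neg))
  have hexpσb : ∀ᵐ ω ∂P, ‖Real.exp (-(t ^ 2 * (P[fun ω' => ξ ω' ^ 2|m]) ω))‖
      ≤ Real.exp (t ^ 2 * M ^ 2) := by
    filter_upwards [hσb] with ω h
    rw [Real.norm_eq_abs, abs_of_pos (Real.exp_pos _)]
    apply Real.exp_le_exp.2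
    have : -(t ^ 2 * (P[fun ω' => ξ ω' ^ 2|m]) ω) ≤ t ^ 2 * |(P[fun ω' => ξ ω' ^ 2|m]) ω| := by
      rw [neg_le]
      nlinarith [abs_nonneg ((P[fun ω' => ξ ω' ^ 2|m]) ω), neg_abs_le ((P[fun ω' => ξ ω' ^ 2|m]) ω), sq_nonneg t]
    refine this.trans ?_
    nlinarith [sq_nonneg t]
  have hpull : (P[fun ω => (fun ω' => Real.exp (-(t ^ 2 * (P[fun ω'' => ξ ω'' ^ 2|m]) ω'))) ω
        * Real.exp (t * X ω)|m]) =ᵐ[P]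
      (fun ω' => Real.exp (-(t ^ 2 * (P[fun ω'' => ξ ω'' ^ 2|m]) ω')))
        * (P[fun ω => Real.exp (t * X ω)|m]) :=
    condExp_stronglyMeasurable_mul_of_bound hm hexpσsm hexpi (Real.exp (t ^ 2 * M ^ 2)) hexpσb
  have hsplit : (fun ω' => Real.exp (t * (ξ ω' - (P[ξ|m]) ω')
        - t ^ 2 * (P[fun ω'' => ξ ω'' ^ 2|m]) ω'))
      = fun ω => Real.exp (-(t ^ 2 * (P[fun ω'' => ξ ω'' ^ 2|m]) ω)) * Real.exp (t * X ω) := by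
    funext ω
    rw [← Real.exp_add]
    congr 1
    simp only [hXdef]
    ring
  rw [hsplit]
  filter_upwards [hpull, hmain, hσb] with ω hp hq hs
  have hp' : (P[fun ω => Real.exp (-(t ^ 2 * (P[fun ω'' => ξ ω'' ^ 2|m]) ω))
      * Real.exp (t * X ω)|m]) ω
      = Real.exp (-(t ^ 2 * (P[fun ω'' => ξ ω'' ^ 2|m]) ω))
        * (P[fun ω => Real.exp (t * X ω)|m]) ω := by
    simpa using hp
  rw [hp']
  set s := (P[fun ω'' => ξ ω'' ^ 2|m]) ω
  calc Real.exp (-(t ^ 2 * s)) * (P[fun ω => Real.exp (t * X ω)|m]) ω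
      ≤ Real.exp (-(t ^ 2 * s)) * (1 + t ^ 2 * s) :=
        mul_le_mul_of_nonneg_left hq (Real.exp_nonneg _)
    _ ≤ Real.exp (-(t ^ 2 * s)) * Real.exp (t ^ 2 * s) :=
        mul_le_mul_of_nonneg_left (by linarith [Real.add_one_le_exp (t ^ 2 * s)])
          (Real.exp_nonneg _)
    _ = 1 := by rw [← Real.exp_add]; simp


set_option maxHeartbeats 2000000 in
/-- Maximal inequality for martingale parts with restricted conditional variance:
there is a universal constant `c > 0` such that for any probability space with a
filtration `𝒢₀ ⊆ … ⊆ 𝒢ₙ`, any nonempty finite index set `F`, constants `M, R > 0`, and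
random variables `ξ_i(f)` (`i = 1,…,n`) that are `𝒢_i`-measurable and bounded by `M`
a.s., setting `G_n^{(1)}(f) = n^{-1/2} ∑_{i=1}^n (ξ_i(f) − E[ξ_i(f)|𝒢_{i−1}])` and
`R_n(f)² = (1/n) ∑_{i=1}^n E[ξ_i(f)²|𝒢_{i−1}]`, one has
`E[max_{f} |G_n^{(1)}(f)|·1_{R_n(f)² ≤ R²}] ≤ c·(R·√H + M·H/√n)` with
`H = max{1, log|F|}`. -/
theorem maximal_inequality_martingale :
    ∃ c : ℝ, 0 < c ∧
      ∀ (Ω : Type) [inst : MeasurableSpace Ω] (P : Measure Ω) [IsProbabilityMeasure P]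
        (G : ℕ → MeasurableSpace Ω)
        (F : Type) [Fintype F] [Nonempty F]
        (n : ℕ), 1 ≤ n → ∀ (M R : ℝ), 0 < M → 0 < R →
        ∀ (ξ : F → ℕ → Ω → ℝ),
        (∀ i j, i ≤ j → j ≤ n → G i ≤ G j) →
        (∀ i, i ≤ n → G i ≤ inst) →
        (∀ f i, 1 ≤ i → i ≤ n → Measurable[G i] (ξ f i)) →
        (∀ f i, 1 ≤ i → i ≤ n → ∀ᵐ ω ∂P, |ξ f i ω| ≤ M) →
        (∫ ω, (Finset.univ.sup' Finset.univ_nonempty fun f =>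
            |(Real.sqrt n)⁻¹ *
              ∑ i ∈ Finset.Icc 1 n, (ξ f i ω - (P[ξ f i|G (i - 1)]) ω)| *
            (if (1 / (n : ℝ)) *
                ∑ i ∈ Finset.Icc 1 n, (P[(fun ω' => (ξ f i ω') ^ 2)|G (i - 1)]) ω ≤ R ^ 2
              then 1 else 0)) ∂P) ≤
          c * (R * Real.sqrt (max 1 (Real.log (Fintype.card F))) +
            M * max 1 (Real.log (Fintype.card F)) / Real.sqrt n) := by
  refine ⟨8, by norm_num, ?_⟩
  intro Ω inst P instP G F instF instNe n hn M R hM hR ξ hGmono hGle hmeas hbdd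
  have hn0 : (0:ℝ) < n := by exact_mod_cast hn
  have hs0 : 0 < Real.sqrt n := Real.sqrt_pos.2 hn0
  set H : ℝ := max 1 (Real.log (Fintype.card F)) with hHdef
  have hH1 : (1:ℝ) ≤ H := le_max_left _ _
  have hH0 : (0:ℝ) < H := lt_of_lt_of_le one_pos hH1
  set S : F → Ω → ℝ :=
    fun f ω => ∑ i ∈ Finset.Icc 1 n, (ξ f i ω - (P[ξ f i|G (i - 1)]) ω) with hSdef
  set V : F → Ω → ℝ :=
    fun f ω => ∑ i ∈ Finset.Icc 1 n, (P[(fun ω' => (ξ f i ω') ^ 2)|G (i - 1)]) ω with hVdef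
  set ind : F → Ω → ℝ := fun f ω => if (1 / (n : ℝ)) * V f ω ≤ R ^ 2 then 1 else 0 with hinddef
  set A : F → Ω → ℝ := fun f ω => |(Real.sqrt n)⁻¹ * S f ω| * ind f ω with hAdef
  set Y : Ω → ℝ := fun ω => Finset.univ.sup' Finset.univ_nonempty (fun f => A f ω) with hYdef
  have hind01 : ∀ f ω, 0 ≤ ind f ω ∧ ind f ω ≤ 1 := by
    intro f ω; rw [hinddef]; dsimp only; split <;> norm_num
  have hAnn : ∀ f ω, 0 ≤ A f ω := fun f ω => mul_nonneg (abs_nonneg _) (hind01 f ω).1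
  have hgoal : (∫ ω, (Finset.univ.sup' Finset.univ_nonempty fun f =>
            |(Real.sqrt n)⁻¹ *
              ∑ i ∈ Finset.Icc 1 n, (ξ f i ω - (P[ξ f i|G (i - 1)]) ω)| *
            (if (1 / (n : ℝ)) *
                ∑ i ∈ Finset.Icc 1 n, (P[(fun ω' => (ξ f i ω') ^ 2)|G (i - 1)]) ω ≤ R ^ 2
              then 1 else 0)) ∂P) = ∫ ω, Y ω ∂P := by
    refine integral_congr_ae (Filter.Eventually.of_forall fun ω => ?_)
    simp only [hYdef, hAdef, hSdef, hVdef, hinddef]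
  rw [hgoal]
  -- basic measurability
  have hmeas' : ∀ f i, 1 ≤ i → i ≤ n → Measurable (ξ f i) :=
    fun f i h1 h2 => (hmeas f i h1 h2).mono (hGle i h2) le_rfl
  have hGle' : ∀ i, i ≤ n → G (i - 1) ≤ inst :=
    fun i h => hGle (i - 1) (le_trans (Nat.sub_le i 1) h)
  have hSmeas : ∀ f, Measurable (S f) := by
    intro f
    rw [hSdef]
    apply Finset.measurable_sum
    intro i hi
    obtain ⟨h1, h2⟩ := Finset.mem_Icc.mp hi
    exact (hmeas' f i h1 h2).sub ((stronglyMeasurable_condExp.mono (hGle' i h2)).measurable)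
  have hVmeas : ∀ f, Measurable (V f) := by
    intro f
    rw [hVdef]
    apply Finset.measurable_sum
    intro i hi
    obtain ⟨h1, h2⟩ := Finset.mem_Icc.mp hi
    exact (stronglyMeasurable_condExp.mono (hGle' i h2)).measurable
  have hindmeas : ∀ f, Measurable (ind f) := by
    intro f
    rw [hinddef]
    exact Measurable.ite (measurableSet_le (measurable_const.mul (hVmeas f)) measurable_const)
      measurable_const measurable_const
  have hAmeas : ∀ f, Measurable (A f) := by
    intro f
    rw [hAdef]
    exact ((measurable_const.mul (hSmeas f)).abs).mul (hindmeas f)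
  have hYmeas : Measurable Y := by
    have h1 : Measurable (Finset.univ.sup' (Finset.univ_nonempty (α := F)) A) :=
      Finset.measurable_sup' _ (fun f _ => hAmeas f)
    have h2 : Y = Finset.univ.sup' (Finset.univ_nonempty (α := F)) A := by
      funext ω
      rw [hYdef, Finset.sup'_apply]
    rw [h2]; exact h1
  -- a.e. master bounds
  have hmaster : ∀ᵐ ω ∂P, ∀ f : F, ∀ i ∈ Finset.Icc 1 n,
      |ξ f i ω - (P[ξ f i|G (i - 1)]) ω| ≤ 2 * M := by
    rw [ae_all_iff]
    intro f
    rw [ae_all_iff]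
    intro i
    by_cases hi : i ∈ Finset.Icc 1 n
    · obtain ⟨h1, h2⟩ := Finset.mem_Icc.mp hi
      have hμb : ∀ᵐ ω ∂P, |(P[ξ f i|G (i - 1)]) ω| ≤ M := by
        have := ae_bdd_condExp_of_ae_bdd (m := G (i - 1)) (μ := P) (R := ⟨M, hM.le⟩)
          (f := ξ f i) (by exact hbdd f i h1 h2)
        exact this
      filter_upwards [hbdd f i h1 h2, hμb] with ω hb1 hb2
      intro _
      calc |ξ f i ω - (P[ξ f i|G (i - 1)]) ω| ≤ |ξ f i ω| + |(P[ξ f i|G (i - 1)]) ω| :=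
        abs_sub _ _
      _ ≤ 2 * M := by linarith
    · exact Filter.Eventually.of_forall fun ω h => absurd h hi
  have hSb : ∀ᵐ ω ∂P, ∀ f : F, |S f ω| ≤ 2 * M * n := by
    filter_upwards [hmaster] with ω hω
    intro f
    rw [hSdef]
    calc |∑ i ∈ Finset.Icc 1 n, (ξ f i ω - (P[ξ f i|G (i - 1)]) ω)|
        ≤ ∑ i ∈ Finset.Icc 1 n, |ξ f i ω - (P[ξ f i|G (i - 1)]) ω| :=
          Finset.abs_sum_le_sum_abs _ _
    _ ≤ ∑ i ∈ Finset.Icc 1 n, (2 * M) := Finset.sum_le_sum (hω f)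
    _ = 2 * M * n := by
        rw [Finset.sum_const, Nat.card_Icc]
        simp [nsmul_eq_mul]
        ring
  have hYnn : ∀ ω, 0 ≤ Y ω := by
    intro ω
    rw [hYdef]
    obtain ⟨f⟩ := instNe
    exact le_trans (hAnn f ω) (Finset.le_sup' (fun f => A f ω) (Finset.mem_univ f))
  have hYb : ∀ᵐ ω ∂P, Y ω ≤ (Real.sqrt n)⁻¹ * (2 * M * n) := by
    filter_upwards [hSb] with ω hω
    rw [hYdef]
    apply Finset.sup'_le
    intro f _
    rw [hAdef]
    calc |(Real.sqrt n)⁻¹ * S f ω| * ind f ω ≤ |(Real.sqrt n)⁻¹ * S f ω| * 1 :=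
      mul_le_mul_of_nonneg_left (hind01 f ω).2 (abs_nonneg _)
    _ = (Real.sqrt n)⁻¹ * |S f ω| := by
        rw [mul_one, abs_mul, abs_of_nonneg (inv_nonneg.2 (Real.sqrt_nonneg _))]
    _ ≤ (Real.sqrt n)⁻¹ * (2 * M * n) :=
      mul_le_mul_of_nonneg_left (hω f) (inv_nonneg.2 (Real.sqrt_nonneg _))
  have hYint : Integrable Y P := by
    refine integrable_bdd (C := (Real.sqrt n)⁻¹ * (2 * M * n)) hYmeas.aestronglyMeasurable ?_
    filter_upwards [hYb] with ω h
    rw [abs_of_nonneg (hYnn ω)]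
    exact h
  -- integrability of indicator-weighted exponentials
  have INT : ∀ (t : ℝ) (f : F), Integrable (fun ω => ind f ω * Real.exp (t * S f ω)) P := by
    intro t f
    refine integrable_bdd (C := Real.exp (|t| * (2 * M * n)))
      (((hindmeas f).mul (Real.measurable_exp.comp ((hSmeas f).const_mul t))).aestronglyMeasurable)
      ?_
    filter_upwards [hSb] with ω hω
    rw [abs_mul, abs_of_nonneg (hind01 f ω).1, abs_of_nonneg (Real.exp_nonneg _)]
    calc ind f ω * Real.exp (t * S f ω) ≤ 1 * Real.exp (t * S f ω) :=
      mul_le_mul_of_nonneg_right (hind01 f ω).2 (Real.exp_nonneg _)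
    _ ≤ Real.exp (|t| * (2 * M * n)) := by
        rw [one_mul]
        apply Real.exp_le_exp.2
        calc t * S f ω ≤ |t * S f ω| := le_abs_self _
        _ = |t| * |S f ω| := abs_mul _ _
        _ ≤ |t| * (2 * M * n) := mul_le_mul_of_nonneg_left (hω f) (abs_nonneg t)
  -- KEY estimate
  have KEY : ∀ t : ℝ, |t| * (2 * M) ≤ 1 → ∀ f : F,
      (∫ ω, ind f ω * Real.exp (t * S f ω) ∂P) ≤ Real.exp (t ^ 2 * ((n : ℝ) * R ^ 2)) := by
    intro t ht f
    set e : ℕ → Ω → ℝ := fun i ω => Real.exp (t * (ξ f i ω - (P[ξ f i|G (i - 1)]) ω)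
      - t ^ 2 * (P[(fun ω' => (ξ f i ω') ^ 2)|G (i - 1)]) ω) with hedef
    set L : ℕ → Ω → ℝ := fun k ω => ∏ i ∈ Finset.Icc 1 k, e i ω with hLdef
    set B : ℝ := Real.exp (1 + t ^ 2 * M ^ 2) with hBdef
    have hB1 : (1:ℝ) ≤ B := Real.one_le_exp (by positivity)
    have hB0 : (0:ℝ) ≤ B := le_trans zero_le_one hB1
    have hLpos : ∀ k ω, 0 < L k ω := by
      intro k ω
      simp only [hLdef]
      exact Finset.prod_pos fun i _ => Real.exp_pos _
    have hstep : ∀ i, 1 ≤ i → i ≤ n → ∀ᵐ ω ∂P, (P[e i|G (i - 1)]) ω ≤ 1 := by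
      intro i h1 h2
      exact condexp_step_le_one (hGle' i h2) (hmeas' f i h1 h2) hM (hbdd f i h1 h2) ht
    have hesm : ∀ i, 1 ≤ i → i ≤ n → StronglyMeasurable[G i] (e i) := by
      intro i h1 h2
      have hξs : StronglyMeasurable[G i] (ξ f i) := (hmeas f i h1 h2).stronglyMeasurable
      have hGsub : G (i - 1) ≤ G i := hGmono (i - 1) i (Nat.sub_le i 1) h2
      have hμs : StronglyMeasurable[G i] (P[ξ f i|G (i - 1)]) :=
        stronglyMeasurable_condExp.mono hGsub
      have hσs : StronglyMeasurable[G i] (P[(fun ω' => (ξ f i ω') ^ 2)|G (i - 1)]) :=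
        stronglyMeasurable_condExp.mono hGsub
      simp only [hedef]
      exact Real.continuous_exp.comp_stronglyMeasurable
        (((hξs.sub hμs).const_mul t).sub (hσs.const_mul (t ^ 2)))
    have heB : ∀ᵐ ω ∂P, ∀ i ∈ Finset.Icc 1 n, |e i ω| ≤ B := by
      rw [ae_all_iff]
      intro i
      by_cases hi : i ∈ Finset.Icc 1 n
      · obtain ⟨h1, h2⟩ := Finset.mem_Icc.mp hi
        have hμb : ∀ᵐ ω ∂P, |(P[ξ f i|G (i - 1)]) ω| ≤ M := by
          have := ae_bdd_condExp_of_ae_bdd (m := G (i - 1)) (μ := P) (R := ⟨M, hM.le⟩)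
            (f := ξ f i) (by exact hbdd f i h1 h2)
          exact this
        have hb2 : ∀ᵐ ω ∂P, |ξ f i ω ^ 2| ≤ M ^ 2 := by
          filter_upwards [hbdd f i h1 h2] with ω h
          simpa [abs_pow] using pow_le_pow_left₀ (abs_nonneg _) h 2
        have hσb : ∀ᵐ ω ∂P, |(P[(fun ω' => (ξ f i ω') ^ 2)|G (i - 1)]) ω| ≤ M ^ 2 := by
          have := ae_bdd_condExp_of_ae_bdd (m := G (i - 1)) (μ := P)
            (R := ⟨M ^ 2, by positivity⟩)
            (f := fun ω' => (ξ f i ω') ^ 2) (by exact hb2)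
          exact this
        filter_upwards [hbdd f i h1 h2, hμb, hσb] with ω hc1 hc2 hc3
        intro _
        simp only [hedef]
        rw [abs_of_pos (Real.exp_pos _), hBdef]
        apply Real.exp_le_exp.2
        have hd1 : |ξ f i ω - (P[ξ f i|G (i - 1)]) ω| ≤ 2 * M := by
          calc |ξ f i ω - (P[ξ f i|G (i - 1)]) ω|
              ≤ |ξ f i ω| + |(P[ξ f i|G (i - 1)]) ω| := abs_sub _ _
          _ ≤ 2 * M := by linarith
        have hd2 : t * (ξ f i ω - (P[ξ f i|G (i - 1)]) ω) ≤ 1 := by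
          calc t * (ξ f i ω - (P[ξ f i|G (i - 1)]) ω)
              ≤ |t * (ξ f i ω - (P[ξ f i|G (i - 1)]) ω)| := le_abs_self _
          _ = |t| * |ξ f i ω - (P[ξ f i|G (i - 1)]) ω| := abs_mul _ _
          _ ≤ |t| * (2 * M) := mul_le_mul_of_nonneg_left hd1 (abs_nonneg t)
          _ ≤ 1 := ht
        have hd3 : -(t ^ 2 * (P[(fun ω' => (ξ f i ω') ^ 2)|G (i - 1)]) ω) ≤ t ^ 2 * M ^ 2 := by
          nlinarith [neg_abs_le ((P[(fun ω' => (ξ f i ω') ^ 2)|G (i - 1)]) ω), sq_nonneg t]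
        linarith
      · exact Filter.Eventually.of_forall fun ω h => absurd h hi
    have hLsm : ∀ k, k ≤ n → StronglyMeasurable[G k] (L k) := by
      intro k hk
      simp only [hLdef]
      apply Finset.stronglyMeasurable_fun_prod
      intro i hi
      obtain ⟨h1, h2⟩ := Finset.mem_Icc.mp hi
      exact (hesm i h1 (le_trans h2 hk)).mono (hGmono i k h2 hk)
    have hLb : ∀ k, k ≤ n → ∀ᵐ ω ∂P, |L k ω| ≤ B ^ n := by
      intro k hk
      filter_upwards [heB] with ω hω
      rw [abs_of_pos (hLpos k ω)]
      simp only [hLdef]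
      calc ∏ i ∈ Finset.Icc 1 k, e i ω ≤ ∏ _i ∈ Finset.Icc 1 k, B := by
            refine Finset.prod_le_prod (fun i _ => (Real.exp_pos _).le) ?_
            · intro i hi
              obtain ⟨h1, h2⟩ := Finset.mem_Icc.mp hi
              exact le_trans (le_abs_self _)
                (hω i (Finset.mem_Icc.mpr ⟨h1, le_trans h2 hk⟩))
      _ = B ^ k := by rw [Finset.prod_const, Nat.card_Icc]; norm_num
      _ ≤ B ^ n := pow_le_pow_right₀ hB1 hk
    have heint : ∀ i, 1 ≤ i → i ≤ n → Integrable (e i) P := by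
      intro i h1 h2
      refine integrable_bdd (C := B) (((hesm i h1 h2).mono (hGle i h2)).aestronglyMeasurable) ?_
      filter_upwards [heB] with ω h
      exact h i (Finset.mem_Icc.mpr ⟨h1, h2⟩)
    have hLint : ∀ k, k ≤ n → Integrable (L k) P := fun k hk =>
      integrable_bdd (((hLsm k hk).mono (hGle k hk)).aestronglyMeasurable) (hLb k hk)
    have hIND : ∀ k, k ≤ n → (∫ ω, L k ω ∂P) ≤ 1 := by
      intro k
      induction k with
      | zero =>
        intro _
        have hL0 : L 0 = fun _ => 1 := by
          funext ω
          simp [hLdef]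
        rw [hL0]
        simp
      | succ k ih =>
        intro hk1
        have hk : k ≤ n := le_trans (Nat.le_succ k) hk1
        have hGk : G k ≤ inst := hGle k hk
        have hsplit : ∀ ω, L (k + 1) ω = L k ω * e (k + 1) ω := by
          intro ω
          simp only [hLdef]
          exact Finset.prod_Icc_succ_top (by omega) _
        have heint1 : Integrable (e (k + 1)) P := heint (k + 1) (by omega) hk1
        have hg : Integrable (fun ω => L k ω * e (k + 1) ω) P :=
          (hLint (k + 1) hk1).congr (Filter.Eventually.of_forall hsplit)
        have hLkb : ∀ᵐ ω ∂P, ‖L k ω‖ ≤ B ^ n := by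
          simpa [Real.norm_eq_abs] using hLb k hk
        have hpull : (P[(fun ω => L k ω * e (k + 1) ω)|G k]) =ᵐ[P]
            fun ω => L k ω * (P[e (k + 1)|G k]) ω :=
          condExp_stronglyMeasurable_mul_of_bound hGk (hLsm k hk) heint1 (B ^ n) hLkb
        have heB1 : ∀ᵐ ω ∂P, |e (k + 1) ω| ≤ B := by
          filter_upwards [heB] with ω h
          exact h (k + 1) (Finset.mem_Icc.mpr ⟨by omega, hk1⟩)
        have hcondb : ∀ᵐ ω ∂P, |(P[e (k + 1)|G k]) ω| ≤ B := by
          have := ae_bdd_condExp_of_ae_bdd (m := G k) (μ := P) (R := ⟨B, hB0⟩)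
            (f := e (k + 1)) (by exact heB1)
          exact this
        have hstep1 : ∀ᵐ ω ∂P, (P[e (k + 1)|G k]) ω ≤ 1 := hstep (k + 1) (by omega) hk1
        have hmulint : Integrable (fun ω => L k ω * (P[e (k + 1)|G k]) ω) P := by
          refine integrable_bdd (C := B ^ n * B)
            ((((hLsm k hk).mono hGk).aestronglyMeasurable).mul
              ((stronglyMeasurable_condExp.mono hGk).aestronglyMeasurable)) ?_
          filter_upwards [hLb k hk, hcondb] with ω h1 h2
          rw [abs_mul]
          exact mul_le_mul h1 h2 (abs_nonneg _) (by positivity)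
        calc (∫ ω, L (k + 1) ω ∂P) = ∫ ω, L k ω * e (k + 1) ω ∂P :=
              integral_congr_ae (Filter.Eventually.of_forall fun ω => hsplit ω)
        _ = ∫ ω, (P[(fun ω => L k ω * e (k + 1) ω)|G k]) ω ∂P := (integral_condExp hGk).symm
        _ = ∫ ω, L k ω * (P[e (k + 1)|G k]) ω ∂P := integral_congr_ae hpull
        _ ≤ ∫ ω, L k ω ∂P := by
            refine integral_mono_ae hmulint (hLint k hk) ?_
            filter_upwards [hstep1] with ω h
            exact mul_le_of_le_one_right (hLpos k ω).le h
        _ ≤ 1 := ih hk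
    have hV' : ∀ ω, L n ω = Real.exp (t * S f ω - t ^ 2 * V f ω) := by
      intro ω
      simp only [hLdef, hedef, hSdef, hVdef]
      rw [← Real.exp_sum]
      congr 1
      rw [Finset.sum_sub_distrib, Finset.mul_sum, Finset.mul_sum]
    have hpt : ∀ ω, ind f ω * Real.exp (t * S f ω)
        ≤ L n ω * Real.exp (t ^ 2 * ((n : ℝ) * R ^ 2)) := by
      intro ω
      by_cases hc : (1 / (n : ℝ)) * V f ω ≤ R ^ 2
      · have hVle : V f ω ≤ (n : ℝ) * R ^ 2 := by
          rw [one_div, inv_mul_eq_div, div_le_iff₀ hn0] at hc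
          linarith
        have hione : ind f ω = 1 := by simp only [hinddef]; exact if_pos hc
        rw [hione, one_mul, hV' ω, ← Real.exp_add]
        apply Real.exp_le_exp.2
        nlinarith [sq_nonneg t]
      · have hizero : ind f ω = 0 := by simp only [hinddef]; exact if_neg hc
        rw [hizero, zero_mul]
        exact mul_nonneg (hLpos n ω).le (Real.exp_nonneg _)
    calc (∫ ω, ind f ω * Real.exp (t * S f ω) ∂P)
        ≤ ∫ ω, L n ω * Real.exp (t ^ 2 * ((n : ℝ) * R ^ 2)) ∂P :=
          integral_mono_ae (INT t f) ((hLint n le_rfl).mul_const _)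
            (Filter.Eventually.of_forall hpt)
    _ = (∫ ω, L n ω ∂P) * Real.exp (t ^ 2 * ((n : ℝ) * R ^ 2)) := integral_mul_const _ _
    _ ≤ 1 * Real.exp (t ^ 2 * ((n : ℝ) * R ^ 2)) :=
          mul_le_mul_of_nonneg_right (hIND n le_rfl) (Real.exp_nonneg _)
    _ = Real.exp (t ^ 2 * ((n : ℝ) * R ^ 2)) := one_mul _

  -- MAIN estimate
  have MAIN : ∀ lam : ℝ, 0 < lam → lam * (2 * M) ≤ 1 →
      lam * Real.sqrt n * ∫ ω, Y ω ∂P ≤ 2 + H + lam ^ 2 * ((n : ℝ) * R ^ 2) := by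
    intro lam hlam hlamM
    set E : ℝ := Real.exp (lam ^ 2 * ((n : ℝ) * R ^ 2)) with hEdef
    have hE1 : (1:ℝ) ≤ E := Real.one_le_exp (by positivity)
    have hE0 : (0:ℝ) < E := lt_of_lt_of_le one_pos hE1
    have habs : |lam| * (2 * M) ≤ 1 := by rwa [abs_of_pos hlam]
    have habs' : |(-lam)| * (2 * M) ≤ 1 := by rwa [abs_neg, abs_of_pos hlam]
    have h1' : ∀ f : F, (∫ ω, ind f ω * Real.exp (lam * S f ω) ∂P) ≤ E := KEY lam habs
    have h2' : ∀ f : F, (∫ ω, ind f ω * Real.exp (-lam * S f ω) ∂P) ≤ E := by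
      intro f
      have := KEY (-lam) habs' f
      rwa [neg_sq] at this
    have hkap : 0 < lam * Real.sqrt n := mul_pos hlam hs0
    have hptY : ∀ ω, Real.exp (lam * Real.sqrt n * Y ω)
        ≤ ∑ f : F, (1 + ind f ω * Real.exp (lam * S f ω)
          + ind f ω * Real.exp (-lam * S f ω)) := by
      intro ω
      obtain ⟨f₀, _, hf₀⟩ :=
        Finset.exists_mem_eq_sup' (Finset.univ_nonempty (α := F)) (fun f => A f ω)
      have hYeq : Y ω = A f₀ ω := by rw [hYdef]; exact hf₀
      have hone : Real.exp (lam * Real.sqrt n * A f₀ ω)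
          ≤ 1 + ind f₀ ω * Real.exp (lam * S f₀ ω) + ind f₀ ω * Real.exp (-lam * S f₀ ω) := by
        by_cases hc : (1 / (n : ℝ)) * V f₀ ω ≤ R ^ 2
        · have hione : ind f₀ ω = 1 := by simp only [hinddef]; exact if_pos hc
          have hexp : lam * Real.sqrt n * A f₀ ω = lam * |S f₀ ω| := by
            simp only [hAdef]
            rw [hione, mul_one, abs_mul, abs_of_nonneg (inv_nonneg.2 (Real.sqrt_nonneg _))]
            field_simp
          rw [hexp, hione, one_mul, one_mul]
          rcases abs_cases (S f₀ ω) with ⟨he, _⟩ | ⟨he, _⟩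
          · rw [he]
            have e1 := Real.exp_pos (-lam * S f₀ ω)
            linarith
          · rw [he]
            have heq : lam * -S f₀ ω = -lam * S f₀ ω := by ring
            rw [heq]
            have e1 := Real.exp_pos (lam * S f₀ ω)
            linarith
        · have hizero : ind f₀ ω = 0 := by simp only [hinddef]; exact if_neg hc
          have hA0 : A f₀ ω = 0 := by simp only [hAdef]; rw [hizero, mul_zero]
          rw [hA0, mul_zero, Real.exp_zero, hizero, zero_mul, zero_mul]
          norm_num
      rw [hYeq]
      refine le_trans hone ?_
      refine Finset.single_le_sum (f := fun f => 1 + ind f ω * Real.exp (lam * S f ω)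
        + ind f ω * Real.exp (-lam * S f ω)) ?_ (Finset.mem_univ f₀)
      intro f _
      have p1 : 0 ≤ ind f ω * Real.exp (lam * S f ω) :=
        mul_nonneg (hind01 f ω).1 (Real.exp_nonneg _)
      have p2 : 0 ≤ ind f ω * Real.exp (-lam * S f ω) :=
        mul_nonneg (hind01 f ω).1 (Real.exp_nonneg _)
      linarith
    have hexpYint : Integrable (fun ω => Real.exp (lam * Real.sqrt n * Y ω)) P := by
      refine integrable_bdd
        (C := Real.exp (lam * Real.sqrt n * ((Real.sqrt n)⁻¹ * (2 * M * n))))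
        ((Real.measurable_exp.comp (hYmeas.const_mul _)).aestronglyMeasurable) ?_
      filter_upwards [hYb] with ω h
      rw [abs_of_pos (Real.exp_pos _)]
      exact Real.exp_le_exp.2 (mul_le_mul_of_nonneg_left h hkap.le)
    have hJ : Real.exp (lam * Real.sqrt n * ∫ ω, Y ω ∂P)
        ≤ ∫ ω, Real.exp (lam * Real.sqrt n * Y ω) ∂P := by
      have hcomp : Integrable (Real.exp ∘ fun ω => lam * Real.sqrt n * Y ω) P := hexpYint
      have := (convexOn_exp).map_integral_le (μ := P) Real.continuous_exp.continuousOn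
        isClosed_univ (Filter.Eventually.of_forall fun ω => Set.mem_univ _)
        (hYint.const_mul (lam * Real.sqrt n)) hcomp
      rwa [integral_const_mul] at this
    have hsumint : Integrable (fun ω => ∑ f : F, (1 + ind f ω * Real.exp (lam * S f ω)
        + ind f ω * Real.exp (-lam * S f ω))) P := by
      apply integrable_finset_sum
      intro f _
      exact ((integrable_const 1).add (INT lam f)).add (INT (-lam) f)
    have hintsum : ∫ ω, Real.exp (lam * Real.sqrt n * Y ω) ∂P
        ≤ (Fintype.card F : ℝ) * (3 * E) := by
      calc ∫ ω, Real.exp (lam * Real.sqrt n * Y ω) ∂P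
          ≤ ∫ ω, ∑ f : F, (1 + ind f ω * Real.exp (lam * S f ω)
            + ind f ω * Real.exp (-lam * S f ω)) ∂P :=
            integral_mono_ae hexpYint hsumint (Filter.Eventually.of_forall hptY)
      _ = ∑ f : F, ∫ ω, (1 + ind f ω * Real.exp (lam * S f ω)
            + ind f ω * Real.exp (-lam * S f ω)) ∂P :=
            integral_finset_sum _
              (fun f _ => ((integrable_const 1).add (INT lam f)).add (INT (-lam) f))
      _ ≤ ∑ _f : F, (3 * E) := by
            apply Finset.sum_le_sum
            intro f _
            have ia1 : Integrable (fun ω => 1 + ind f ω * Real.exp (lam * S f ω)) P :=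
              (integrable_const 1).add (INT lam f)
            rw [integral_add ia1 (INT (-lam) f), integral_add (integrable_const 1) (INT lam f)]
            have hc1 : ∫ (_ : Ω), (1:ℝ) ∂P = 1 := by simp
            rw [hc1]
            have ha := h1' f
            have hb := h2' f
            linarith
      _ = (Fintype.card F : ℝ) * (3 * E) := by
            rw [Finset.sum_const, Finset.card_univ, nsmul_eq_mul]
    have hcard0 : (0:ℝ) < (Fintype.card F : ℝ) := by exact_mod_cast Fintype.card_pos
    have hlog : lam * Real.sqrt n * ∫ ω, Y ω ∂P
        ≤ Real.log ((Fintype.card F : ℝ) * (3 * E)) := by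
      rw [Real.le_log_iff_exp_le (by positivity)]
      exact le_trans hJ hintsum
    have hlogeq : Real.log ((Fintype.card F : ℝ) * (3 * E))
        = Real.log (Fintype.card F) + Real.log 3 + lam ^ 2 * ((n : ℝ) * R ^ 2) := by
      rw [Real.log_mul (ne_of_gt hcard0) (by positivity),
        Real.log_mul (by norm_num) (ne_of_gt hE0), hEdef, Real.log_exp]
      ring
    have hlog3 : Real.log 3 ≤ 2 := by
      rw [Real.log_le_iff_le_exp (by norm_num)]
      nlinarith [Real.add_one_le_exp 2]
    have hlogF : Real.log (Fintype.card F) ≤ H := le_max_right _ _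
    calc lam * Real.sqrt n * ∫ ω, Y ω ∂P
        ≤ Real.log ((Fintype.card F : ℝ) * (3 * E)) := hlog
    _ = Real.log (Fintype.card F) + Real.log 3 + lam ^ 2 * ((n : ℝ) * R ^ 2) := hlogeq
    _ ≤ 2 + H + lam ^ 2 * ((n : ℝ) * R ^ 2) := by linarith
  -- final arithmetic
  have hsqrtH : 0 < Real.sqrt H := Real.sqrt_pos.2 hH0
  have hsH2 : Real.sqrt H ^ 2 = H := Real.sq_sqrt hH0.le
  have hsn2 : Real.sqrt n ^ 2 = (n : ℝ) := Real.sq_sqrt hn0.le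
  rcases le_total (Real.sqrt H / (R * Real.sqrt n)) (1 / (2 * M)) with hc | hc
  · set lam := Real.sqrt H / (R * Real.sqrt n) with hlamdef
    have hlam0 : 0 < lam := div_pos hsqrtH (mul_pos hR hs0)
    have hlamM : lam * (2 * M) ≤ 1 := by
      rw [← le_div_iff₀ (by positivity : (0:ℝ) < 2 * M)]
      exact hc
    have h := MAIN lam hlam0 hlamM
    have hksimp : lam * Real.sqrt n = Real.sqrt H / R := by
      rw [hlamdef]
      field_simp
    have hlsimp : lam ^ 2 * ((n : ℝ) * R ^ 2) = H := by
      rw [hlamdef, div_pow, mul_pow, hsH2, hsn2,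
        div_mul_eq_mul_div, div_eq_iff (by positivity : ((R:ℝ) ^ 2 * (n:ℝ)) ≠ 0)]
      ring
    rw [hksimp, hlsimp] at h
    have h4 : Real.sqrt H * ∫ ω, Y ω ∂P ≤ 4 * H * R := by
      rw [div_mul_eq_mul_div, div_le_iff₀ hR] at h
      nlinarith [hH1]
    have hY4 : ∫ ω, Y ω ∂P ≤ 4 * (R * Real.sqrt H) := by
      have hfrac : (4 * H * R) / Real.sqrt H = 4 * (R * Real.sqrt H) := by
        have : (4 * H * R) / Real.sqrt H = 4 * R * (H / Real.sqrt H) := by ring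
        rw [this, Real.div_sqrt]
        ring
      calc ∫ ω, Y ω ∂P = (Real.sqrt H * ∫ ω, Y ω ∂P) / Real.sqrt H := by
            field_simp
      _ ≤ (4 * H * R) / Real.sqrt H := by gcongr
      _ = 4 * (R * Real.sqrt H) := hfrac
    have hpos2 : 0 < M * H / Real.sqrt n := by positivity
    calc ∫ ω, Y ω ∂P ≤ 4 * (R * Real.sqrt H) := hY4
    _ ≤ 8 * (R * Real.sqrt H + M * H / Real.sqrt n) := by
        nlinarith [mul_pos hR hsqrtH]
  · set lam := 1 / (2 * M) with hlamdef
    have hlam0 : 0 < lam := by rw [hlamdef]; positivity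
    have hlamM : lam * (2 * M) ≤ 1 := by
      rw [hlamdef, one_div, inv_mul_cancel₀ (by positivity)]
    have h := MAIN lam hlam0 hlamM
    have hnR : (n : ℝ) * R ^ 2 ≤ 4 * M ^ 2 * H := by
      have h5 : R * Real.sqrt n ≤ 2 * M * Real.sqrt H := by
        rw [div_le_div_iff₀ (by positivity) (by positivity)] at hc
        nlinarith
      nlinarith [mul_self_le_mul_self (by positivity : (0:ℝ) ≤ R * Real.sqrt n) h5,
        hsn2, hsH2, Real.sqrt_nonneg H, Real.sqrt_nonneg (n:ℝ)]
    have hlam2 : lam ^ 2 * ((n : ℝ) * R ^ 2) ≤ H := by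
      rw [hlamdef, div_pow, one_pow, div_mul_eq_mul_div, div_le_iff₀ (by positivity)]
      nlinarith [hH0]
    have h7 : lam * Real.sqrt n * ∫ ω, Y ω ∂P ≤ 4 * H := by linarith
    have h8 : Real.sqrt n * ∫ ω, Y ω ∂P ≤ 8 * M * H := by
      rw [hlamdef, div_mul_eq_mul_div, one_mul, div_mul_eq_mul_div,
        div_le_iff₀ (by positivity : (0:ℝ) < 2 * M)] at h7
      nlinarith
    have hY8 : ∫ ω, Y ω ∂P ≤ 8 * (M * H / Real.sqrt n) := by
      have : 8 * (M * H / Real.sqrt n) = (8 * M * H) / Real.sqrt n := by ring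
      rw [this, le_div_iff₀ hs0]
      nlinarith
    calc ∫ ω, Y ω ∂P ≤ 8 * (M * H / Real.sqrt n) := hY8
    _ ≤ 8 * (R * Real.sqrt H + M * H / Real.sqrt n) := by
        nlinarith [mul_pos hR hsqrtH]
end

section
/- Vanishing of weighted truncated second moments (Lindeberg averaging lemma, part (i)): Let (W_i(u))_{i ∈ ℕ, u ∈ [0,1]} be real random variables on a common probability space such that for each u ∈ [0,1] and each i, W_i(u) has the same distribution as W₀(u); assume sup_{u ∈ [0,1]} E[W₀(u)²]^{1/2} < ∞ and that there exist C_W > 0 and ς ∈ (0,1] with E[(W₀(u) − W₀(v))²]^{1/2} ≤ C_W·|u − v|^ς for all u, v ∈ [0,1]. Let a_n : [0,1] → ℝ, n ∈ ℕ, satisfy limsup_{n→∞} (1/n)·Σ_{i=1}^n |a_n(i/n)| < ∞, and let (c_n) be a real sequence with c_n → ∞. Then (1/n)·Σ_{i=1}^n |a_n(i/n)|·E[W_i(i/n)²·1_{{|W_i(i/n)| > c_n}}] → 0 as n → ∞. -/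
open MeasureTheory Filter

set_option maxHeartbeats 1000000

section Aux

variable {Ω : Type*} [MeasurableSpace Ω] (P : Measure Ω) [IsProbabilityMeasure P]

lemma aux_integrable_ite {X : Ω → ℝ} (hX : Measurable X)
    (hint : Integrable (fun ω => X ω ^ 2) P) (c : ℝ) :
    Integrable (fun ω => if c < |X ω| then X ω ^ 2 else 0) P := by
  refine hint.mono' ?_ ?_
  · exact (Measurable.ite (measurableSet_lt measurable_const hX.abs) (hX.pow_const 2)
      measurable_const).aestronglyMeasurable
  · filter_upwards with ω
    rw [Real.norm_eq_abs]
    split_ifs with h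
    · rw [abs_of_nonneg (sq_nonneg _)]
    · simpa using sq_nonneg (X ω)

lemma aux_markov {X : Ω → ℝ} (hX : Measurable X)
    (hint : Integrable (fun ω => X ω ^ 2) P) {c : ℝ} (hc : 0 < c) :
    (P {ω | c < |X ω|}).toReal ≤ (∫ ω, X ω ^ 2 ∂P) / c ^ 2 := by
  have hA : MeasurableSet {ω | c < |X ω|} := measurableSet_lt measurable_const hX.abs
  rw [le_div_iff₀ (by positivity)]
  have h1 : (P {ω | c < |X ω|}).toReal * c ^ 2
      = ∫ _ω in {ω | c < |X ω|}, c ^ 2 ∂P := by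
    rw [setIntegral_const, smul_eq_mul]
    rfl
  rw [h1]
  calc ∫ _ω in {ω | c < |X ω|}, c ^ 2 ∂P
      ≤ ∫ ω in {ω | c < |X ω|}, X ω ^ 2 ∂P := by
        refine setIntegral_mono_on (integrableOn_const (measure_ne_top _ _))
          hint.integrableOn hA (fun ω hω => ?_)
        have : c ≤ |X ω| := le_of_lt hω
        calc c ^ 2 ≤ |X ω| ^ 2 := by nlinarith [abs_nonneg (X ω)]
          _ = X ω ^ 2 := sq_abs _
    _ ≤ ∫ ω, X ω ^ 2 ∂P :=
        setIntegral_le_integral hint (Eventually.of_forall fun ω => sq_nonneg _)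

lemma aux_tail {X : Ω → ℝ} (hX : Measurable X)
    (hint : Integrable (fun ω => X ω ^ 2) P) :
    Tendsto (fun M : ℕ => ∫ ω, (if (M : ℝ) < |X ω| then X ω ^ 2 else 0) ∂P)
      atTop (nhds 0) := by
  have key : Tendsto (fun M : ℕ => ∫ ω, (if (M : ℝ) < |X ω| then X ω ^ 2 else 0) ∂P)
      atTop (nhds (∫ _ω, (0 : ℝ) ∂P)) := by
    apply tendsto_integral_filter_of_dominated_convergence (fun ω => X ω ^ 2)
    · filter_upwards with M
      exact (aux_integrable_ite P hX hint _).aestronglyMeasurable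
    · filter_upwards with M
      filter_upwards with ω
      rw [Real.norm_eq_abs]
      split_ifs with h
      · rw [abs_of_nonneg (sq_nonneg _)]
      · simpa using sq_nonneg (X ω)
    · exact hint
    · filter_upwards with ω
      apply Tendsto.congr' _ tendsto_const_nhds
      filter_upwards [eventually_ge_atTop ⌈|X ω|⌉₊] with M hM
      have hle : ¬ ((M : ℝ) < |X ω|) := by
        push_neg
        calc |X ω| ≤ (⌈|X ω|⌉₊ : ℝ) := Nat.le_ceil _
          _ ≤ (M : ℝ) := by exact_mod_cast hM
      rw [if_neg hle]
  simpa using key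

lemma aux_abscont {X : Ω → ℝ} (hX : Measurable X)
    (hint : Integrable (fun ω => X ω ^ 2) P) {ε : ℝ} (hε : 0 < ε) :
    ∃ η > 0, ∀ s : Set Ω, MeasurableSet s → (P s).toReal ≤ η →
      ∫ ω in s, X ω ^ 2 ∂P ≤ ε := by
  have ht := aux_tail P hX hint
  obtain ⟨M, hM⟩ := (ht.eventually_lt_const (half_pos hε)).exists
  refine ⟨ε / (2 * ((M : ℝ) ^ 2 + 1)), by positivity, fun s hs hPs => ?_⟩
  have hpt : ∀ ω, X ω ^ 2 ≤ (if (M : ℝ) < |X ω| then X ω ^ 2 else 0) + (M : ℝ) ^ 2 := by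
    intro ω
    split_ifs with h
    · nlinarith [sq_nonneg (M : ℝ)]
    · push_neg at h
      have : X ω ^ 2 ≤ (M : ℝ) ^ 2 := by
        calc X ω ^ 2 = |X ω| ^ 2 := (sq_abs _).symm
          _ ≤ (M : ℝ) ^ 2 := by nlinarith [abs_nonneg (X ω)]
      linarith
  calc ∫ ω in s, X ω ^ 2 ∂P
      ≤ ∫ ω in s, ((if (M : ℝ) < |X ω| then X ω ^ 2 else 0) + (M : ℝ) ^ 2) ∂P := by
        refine setIntegral_mono_on hint.integrableOn
          (((aux_integrable_ite P hX hint _).add (integrable_const _)).integrableOn)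
          hs (fun ω _ => hpt ω)
    _ = (∫ ω in s, (if (M : ℝ) < |X ω| then X ω ^ 2 else 0) ∂P)
        + ∫ _ω in s, (M : ℝ) ^ 2 ∂P := by
        have hI1 : Integrable (fun ω => if (M : ℝ) < |X ω| then X ω ^ 2 else 0)
            (P.restrict s) := (aux_integrable_ite P hX hint ((M : ℝ))).restrict
        have hI2 : Integrable (fun _ω : Ω => (M : ℝ) ^ 2) (P.restrict s) :=
          integrable_const _
        exact integral_add hI1 hI2
    _ ≤ ε / 2 + (P s).toReal * (M : ℝ) ^ 2 := by
        gcongr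
        · calc ∫ ω in s, (if (M : ℝ) < |X ω| then X ω ^ 2 else 0) ∂P
              ≤ ∫ ω, (if (M : ℝ) < |X ω| then X ω ^ 2 else 0) ∂P := by
                refine setIntegral_le_integral (aux_integrable_ite P hX hint _)
                  (Eventually.of_forall fun ω => ?_)
                dsimp only [Pi.zero_apply]
                split_ifs
                · exact sq_nonneg _
                · exact le_refl 0
            _ ≤ ε / 2 := hM.le
        · rw [setIntegral_const, smul_eq_mul]
          exact le_rfl
    _ ≤ ε / 2 + ε / 2 := by
        have h1 : (P s).toReal * (M : ℝ) ^ 2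
            ≤ ε / (2 * ((M : ℝ) ^ 2 + 1)) * (M : ℝ) ^ 2 := by
          apply mul_le_mul_of_nonneg_right hPs (sq_nonneg _)
        have h2 : ε / (2 * ((M : ℝ) ^ 2 + 1)) * (M : ℝ) ^ 2 ≤ ε / 2 := by
          rw [div_mul_eq_mul_div, div_le_div_iff₀ (by positivity) (by norm_num)]
          nlinarith [sq_nonneg (M : ℝ)]
        linarith
    _ = ε := by ring

lemma aux_transfer {X Y : Ω → ℝ} (hX : Measurable X) (hY : Measurable Y)
    (h : Measure.map X P = Measure.map Y P) (c : ℝ) :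
    ∫ ω, (if c < |X ω| then X ω ^ 2 else 0) ∂P
      = ∫ ω, (if c < |Y ω| then Y ω ^ 2 else 0) ∂P := by
  have hg : Measurable fun x : ℝ => if c < |x| then x ^ 2 else 0 :=
    Measurable.ite (measurableSet_lt measurable_const measurable_abs)
      (measurable_id.pow_const 2) measurable_const
  calc ∫ ω, (if c < |X ω| then X ω ^ 2 else 0) ∂P
      = ∫ x, (if c < |x| then x ^ 2 else 0) ∂(P.map X) :=
        (integral_map hX.aemeasurable hg.aestronglyMeasurable).symm
    _ = ∫ x, (if c < |x| then x ^ 2 else 0) ∂(P.map Y) := by rw [h]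
    _ = _ := integral_map hY.aemeasurable hg.aestronglyMeasurable

lemma aux_unif (W0 : ℝ → Ω → ℝ) (hmeas : ∀ u, Measurable (W0 u))
    (hint : ∀ u : ℝ, 0 ≤ u → u ≤ 1 → Integrable (fun ω => W0 u ω ^ 2) P)
    (K : ℝ) (hK : ∀ u : ℝ, 0 ≤ u → u ≤ 1 → Real.sqrt (∫ ω, W0 u ω ^ 2 ∂P) ≤ K)
    (CW ς : ℝ) (hCW : 0 < CW) (hς0 : 0 < ς)
    (hHolder : ∀ u v : ℝ, 0 ≤ u → u ≤ 1 → 0 ≤ v → v ≤ 1 →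
      Real.sqrt (∫ ω, (W0 u ω - W0 v ω) ^ 2 ∂P) ≤ CW * |u - v| ^ ς)
    {ε : ℝ} (hε : 0 < ε) :
    ∃ c₀ : ℝ, ∀ c : ℝ, c₀ ≤ c → ∀ u : ℝ, 0 ≤ u → u ≤ 1 →
      ∫ ω, (if c < |W0 u ω| then W0 u ω ^ 2 else 0) ∂P ≤ ε := by
  have hK0 : 0 ≤ K := le_trans (Real.sqrt_nonneg _) (hK 0 le_rfl zero_le_one)
  -- choose mesh size m and modulus D
  obtain ⟨D, hD0, hD2, m, hm0', hDm⟩ :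
      ∃ D : ℝ, 0 ≤ D ∧ D ^ 2 ≤ ε / 4 ∧
        ∃ m : ℕ, (0 : ℝ) < (m : ℝ) ∧ CW * (1 / (m : ℝ)) ^ ς ≤ D := by
    have hsε : 0 < Real.sqrt ε := Real.sqrt_pos.2 hε
    have hr0 : 0 < Real.sqrt ε / (2 * CW) := by positivity
    set r : ℝ := Real.sqrt ε / (2 * CW) with hr
    set δ : ℝ := min 1 (r ^ (1 / ς)) with hδdef
    have hδ0 : 0 < δ := lt_min one_pos (Real.rpow_pos_of_pos hr0 _)
    refine ⟨Real.sqrt ε / 2, by positivity, ?_, ⌈1 / δ⌉₊, ?_, ?_⟩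
    · have hsq : Real.sqrt ε ^ 2 = ε := Real.sq_sqrt hε.le
      nlinarith
    · have : 0 < ⌈1 / δ⌉₊ := Nat.ceil_pos.2 (by positivity)
      exact_mod_cast this
    · have hm0' : (0 : ℝ) < (⌈1 / δ⌉₊ : ℝ) := by
        have : 0 < ⌈1 / δ⌉₊ := Nat.ceil_pos.2 (by positivity)
        exact_mod_cast this
      have hinvm : 1 / (⌈1 / δ⌉₊ : ℝ) ≤ δ := by
        rw [div_le_iff₀ hm0']
        have h1 : 1 / δ ≤ (⌈1 / δ⌉₊ : ℝ) := Nat.le_ceil _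
        rw [div_le_iff₀ hδ0] at h1
        linarith [mul_comm δ (⌈1 / δ⌉₊ : ℝ)]
      have h1 : (1 / (⌈1 / δ⌉₊ : ℝ)) ^ ς ≤ δ ^ ς :=
        Real.rpow_le_rpow (by positivity) hinvm hς0.le
      have h2 : δ ^ ς ≤ r := by
        calc δ ^ ς ≤ (r ^ (1 / ς)) ^ ς :=
              Real.rpow_le_rpow hδ0.le (min_le_right _ _) hς0.le
          _ = r := by
              rw [← Real.rpow_mul hr0.le, one_div, inv_mul_cancel₀ hς0.ne', Real.rpow_one]
      calc CW * (1 / (⌈1 / δ⌉₊ : ℝ)) ^ ς ≤ CW * r :=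
            mul_le_mul_of_nonneg_left (h1.trans h2) hCW.le
        _ = Real.sqrt ε / 2 := by rw [hr]; field_simp
  -- grid absolute continuity
  have hgrid : ∀ j : Fin (m + 1), ∃ η > 0, ∀ s : Set Ω, MeasurableSet s →
      (P s).toReal ≤ η → ∫ ω in s, W0 ((j : ℝ) / (m : ℝ)) ω ^ 2 ∂P ≤ ε / 8 := by
    intro j
    have hj1 : (j : ℝ) / (m : ℝ) ≤ 1 := by
      rw [div_le_one hm0']
      exact_mod_cast Fin.is_le j
    exact aux_abscont P (hmeas _) (hint _ (by positivity) hj1) (by positivity)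
  choose η hη0 hη using hgrid
  obtain ⟨η0, hη00, hη0le⟩ : ∃ η0 : ℝ, 0 < η0 ∧ ∀ j : Fin (m + 1), η0 ≤ η j :=
    ⟨Finset.univ.inf' Finset.univ_nonempty η,
      (Finset.lt_inf'_iff _).2 fun j _ => hη0 j,
      fun j => Finset.inf'_le _ (Finset.mem_univ j)⟩
  -- choice of c₀
  refine ⟨max 1 (Real.sqrt ((4 * (K ^ 2 + D ^ 2) + 1) / η0)), fun c hc u hu0 hu1 => ?_⟩
  have hc1 : (1 : ℝ) ≤ c := le_trans (le_max_left _ _) hc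
  have hc0 : 0 < c := lt_of_lt_of_le one_pos hc1
  have hNle : 4 * (K ^ 2 + D ^ 2) + 1 ≤ η0 * c ^ 2 := by
    have hQ0 : 0 < (4 * (K ^ 2 + D ^ 2) + 1) / η0 := by positivity
    have h1 : Real.sqrt ((4 * (K ^ 2 + D ^ 2) + 1) / η0) ≤ c :=
      le_trans (le_max_right _ _) hc
    have h2 : (4 * (K ^ 2 + D ^ 2) + 1) / η0 ≤ c ^ 2 := by
      nlinarith [Real.sq_sqrt hQ0.le, Real.sqrt_nonneg ((4 * (K ^ 2 + D ^ 2) + 1) / η0)]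
    rw [div_le_iff₀ hη00] at h2
    linarith [mul_comm (c ^ 2) η0]
  have hKc : 4 * K ^ 2 ≤ η0 * c ^ 2 := by nlinarith [sq_nonneg D]
  have hDc : 4 * D ^ 2 ≤ η0 * c ^ 2 := by nlinarith [sq_nonneg K]
  -- nearest grid point, with its properties, then forget its construction
  obtain ⟨v, hv0, hv1, huv, hvgrid⟩ :
      ∃ v : ℝ, 0 ≤ v ∧ v ≤ 1 ∧ |u - v| ≤ 1 / (m : ℝ) ∧
        ∀ s : Set Ω, MeasurableSet s → (P s).toReal ≤ η0 →
          ∫ ω in s, W0 v ω ^ 2 ∂P ≤ ε / 8 := by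
    have hm0n : 0 < m := by exact_mod_cast hm0'
    have hjm : ⌊u * m⌋₊ ≤ m := by
      have h : u * m ≤ (m : ℝ) := by nlinarith
      calc ⌊u * m⌋₊ ≤ ⌊(m : ℝ)⌋₊ := Nat.floor_le_floor h
        _ = m := Nat.floor_natCast m
    have hvu : ((⌊u * m⌋₊ : ℝ)) / m ≤ u := by
      rw [div_le_iff₀ hm0']
      exact Nat.floor_le (by positivity)
    refine ⟨(⌊u * m⌋₊ : ℝ) / m, by positivity, ?_, ?_, ?_⟩
    · rw [div_le_one hm0']
      exact_mod_cast hjm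
    · rw [abs_of_nonneg (by linarith)]
      have h1 : u * m < ⌊u * m⌋₊ + 1 := Nat.lt_floor_add_one _
      rw [sub_le_iff_le_add, ← add_div, le_div_iff₀ hm0']
      linarith
    · intro s hs hPs
      exact hη ⟨⌊u * m⌋₊, Nat.lt_succ_of_le hjm⟩ s hs
        (le_trans hPs (hη0le ⟨⌊u * m⌋₊, Nat.lt_succ_of_le hjm⟩))
  clear hη0le hη hη0
  have hXm : Measurable (W0 u) := hmeas u
  have hYm : Measurable (W0 v) := hmeas v
  have hXint : Integrable (fun ω => W0 u ω ^ 2) P := hint u hu0 hu1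
  have hYint : Integrable (fun ω => W0 v ω ^ 2) P := hint v hv0 hv1
  have hXYm : Measurable (fun ω => W0 u ω - W0 v ω) := hXm.sub hYm
  have hXYint : Integrable (fun ω => (W0 u ω - W0 v ω) ^ 2) P := by
    refine ((hXint.const_mul 2).add (hYint.const_mul 2)).mono'
      ((hXYm.pow_const 2).aestronglyMeasurable) ?_
    filter_upwards with ω
    simp only [Pi.add_apply]
    rw [Real.norm_eq_abs, abs_of_nonneg (sq_nonneg _)]
    nlinarith [sq_nonneg (W0 u ω + W0 v ω)]
  -- Hölder bound
  have hIXY : ∫ ω, (W0 u ω - W0 v ω) ^ 2 ∂P ≤ D ^ 2 := by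
    have h1 : Real.sqrt (∫ ω, (W0 u ω - W0 v ω) ^ 2 ∂P) ≤ D := by
      refine le_trans (hHolder u v hu0 hu1 hv0 hv1) (le_trans ?_ hDm)
      exact mul_le_mul_of_nonneg_left
        (Real.rpow_le_rpow (abs_nonneg _) huv hς0.le) hCW.le
    have h2 : 0 ≤ ∫ ω, (W0 u ω - W0 v ω) ^ 2 ∂P :=
      integral_nonneg fun ω => sq_nonneg _
    nlinarith [Real.sq_sqrt h2, Real.sqrt_nonneg (∫ ω, (W0 u ω - W0 v ω) ^ 2 ∂P)]
  have hIY : ∫ ω, W0 v ω ^ 2 ∂P ≤ K ^ 2 := by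
    have h1 := hK v hv0 hv1
    have h2 : 0 ≤ ∫ ω, W0 v ω ^ 2 ∂P := integral_nonneg fun ω => sq_nonneg _
    nlinarith [Real.sq_sqrt h2, Real.sqrt_nonneg (∫ ω, W0 v ω ^ 2 ∂P)]
  -- sets
  have hAm : MeasurableSet {ω | c < |W0 u ω|} := measurableSet_lt measurable_const hXm.abs
  have hA1m : MeasurableSet {ω | c / 2 < |W0 v ω|} :=
    measurableSet_lt measurable_const hYm.abs
  have hA2m : MeasurableSet {ω | c / 2 < |W0 u ω - W0 v ω|} :=
    measurableSet_lt measurable_const hXYm.abs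
  -- measure bounds
  have hPA1 : (P {ω | c / 2 < |W0 v ω|}).toReal ≤ η0 := by
    have h1 := aux_markov P hYm hYint (c := c / 2) (by positivity)
    refine le_trans h1 ?_
    rw [div_le_iff₀ (by positivity)]
    calc ∫ ω, W0 v ω ^ 2 ∂P ≤ K ^ 2 := hIY
      _ ≤ η0 * c ^ 2 / 4 := by linarith
      _ = η0 * (c / 2) ^ 2 := by ring
  have hPA2 : (P {ω | c / 2 < |W0 u ω - W0 v ω|}).toReal ≤ η0 := by
    have h1 := aux_markov P hXYm hXYint (c := c / 2) (by positivity)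
    refine le_trans h1 ?_
    rw [div_le_iff₀ (by positivity)]
    calc ∫ ω, (W0 u ω - W0 v ω) ^ 2 ∂P ≤ D ^ 2 := hIXY
      _ ≤ η0 * c ^ 2 / 4 := by linarith
      _ = η0 * (c / 2) ^ 2 := by ring
  -- covering
  have hsub : ∀ ω, ω ∈ {ω | c < |W0 u ω|} →
      ω ∈ {ω | c / 2 < |W0 v ω|} ∨ ω ∈ {ω | c / 2 < |W0 u ω - W0 v ω|} := by
    intro ω hω
    by_contra h
    push_neg at h
    obtain ⟨h1, h2⟩ := h
    rw [Set.mem_setOf_eq, not_lt] at h1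
    rw [Set.mem_setOf_eq, not_lt] at h2
    rw [Set.mem_setOf_eq] at hω
    have habs : |W0 u ω| ≤ |W0 v ω| + |W0 u ω - W0 v ω| := by
      calc |W0 u ω| = |W0 v ω + (W0 u ω - W0 v ω)| := by congr 1; ring
        _ ≤ |W0 v ω| + |W0 u ω - W0 v ω| := abs_add_le _ _
    linarith
  have hptwise : ∀ ω, (if c < |W0 u ω| then W0 u ω ^ 2 else 0)
      ≤ 2 * (W0 u ω - W0 v ω) ^ 2
        + 2 * Set.indicator {ω | c < |W0 u ω|} (fun ω => W0 v ω ^ 2) ω := by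
    intro ω
    by_cases h : c < |W0 u ω|
    · rw [if_pos h, Set.indicator_of_mem (by exact h)]
      nlinarith [sq_nonneg (W0 u ω - 2 * W0 v ω)]
    · rw [if_neg h, Set.indicator_of_notMem (by exact h)]
      nlinarith [sq_nonneg (W0 u ω - W0 v ω)]
  have hind1 : Integrable (Set.indicator {ω | c < |W0 u ω|} (fun ω => W0 v ω ^ 2)) P :=
    hYint.indicator hAm
  have hmain : ∫ ω, (if c < |W0 u ω| then W0 u ω ^ 2 else 0) ∂P
      ≤ 2 * (∫ ω, (W0 u ω - W0 v ω) ^ 2 ∂P)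
        + 2 * ∫ ω in {ω | c < |W0 u ω|}, W0 v ω ^ 2 ∂P := by
    calc ∫ ω, (if c < |W0 u ω| then W0 u ω ^ 2 else 0) ∂P
        ≤ ∫ ω, (2 * (W0 u ω - W0 v ω) ^ 2
            + 2 * Set.indicator {ω | c < |W0 u ω|} (fun ω => W0 v ω ^ 2) ω) ∂P :=
          integral_mono (aux_integrable_ite P hXm hXint c)
            ((hXYint.const_mul 2).add (hind1.const_mul 2)) hptwise
      _ = 2 * (∫ ω, (W0 u ω - W0 v ω) ^ 2 ∂P)
          + 2 * ∫ ω, Set.indicator {ω | c < |W0 u ω|} (fun ω => W0 v ω ^ 2) ω ∂P := by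
          rw [integral_add (hXYint.const_mul 2) (hind1.const_mul 2),
            integral_const_mul, integral_const_mul]
      _ = 2 * (∫ ω, (W0 u ω - W0 v ω) ^ 2 ∂P)
          + 2 * ∫ ω in {ω | c < |W0 u ω|}, W0 v ω ^ 2 ∂P := by
          rw [integral_indicator hAm]
  -- split set integral over A
  have hsplit : ∫ ω in {ω | c < |W0 u ω|}, W0 v ω ^ 2 ∂P
      ≤ (∫ ω in {ω | c / 2 < |W0 v ω|}, W0 v ω ^ 2 ∂P)
        + ∫ ω in {ω | c / 2 < |W0 u ω - W0 v ω|}, W0 v ω ^ 2 ∂P := by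
    rw [← integral_indicator hAm, ← integral_indicator hA1m, ← integral_indicator hA2m,
      ← integral_add (hYint.indicator hA1m) (hYint.indicator hA2m)]
    refine integral_mono (hYint.indicator hAm)
      ((hYint.indicator hA1m).add (hYint.indicator hA2m)) (fun ω => ?_)
    simp only [Pi.add_apply]
    by_cases h : ω ∈ {ω | c < |W0 u ω|}
    · rw [Set.indicator_of_mem h]
      rcases hsub ω h with h1 | h2
      · calc W0 v ω ^ 2
            = Set.indicator {ω | c / 2 < |W0 v ω|} (fun ω => W0 v ω ^ 2) ω := by
              rw [Set.indicator_of_mem h1]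
          _ ≤ _ := le_add_of_nonneg_right (Set.indicator_nonneg (fun ω _ => sq_nonneg _) ω)
      · calc W0 v ω ^ 2
            = Set.indicator {ω | c / 2 < |W0 u ω - W0 v ω|} (fun ω => W0 v ω ^ 2) ω := by
              rw [Set.indicator_of_mem h2]
          _ ≤ _ := le_add_of_nonneg_left (Set.indicator_nonneg (fun ω _ => sq_nonneg _) ω)
    · rw [Set.indicator_of_notMem h]
      exact add_nonneg (Set.indicator_nonneg (fun ω _ => sq_nonneg _) ω)
        (Set.indicator_nonneg (fun ω _ => sq_nonneg _) ω)
  have hYA1 : ∫ ω in {ω | c / 2 < |W0 v ω|}, W0 v ω ^ 2 ∂P ≤ ε / 8 :=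
    hvgrid _ hA1m hPA1
  have hYA2 : ∫ ω in {ω | c / 2 < |W0 u ω - W0 v ω|}, W0 v ω ^ 2 ∂P ≤ ε / 8 :=
    hvgrid _ hA2m hPA2
  calc ∫ ω, (if c < |W0 u ω| then W0 u ω ^ 2 else 0) ∂P
      ≤ 2 * (∫ ω, (W0 u ω - W0 v ω) ^ 2 ∂P)
        + 2 * ∫ ω in {ω | c < |W0 u ω|}, W0 v ω ^ 2 ∂P := hmain
    _ ≤ 2 * D ^ 2 + 2 * (ε / 8 + ε / 8) := by
        gcongr
        exact hsplit.trans (by linarith)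
    _ ≤ 2 * (ε / 4) + 2 * (ε / 8 + ε / 8) := by linarith
    _ = ε := by ring

end Aux

/-- Lindeberg averaging lemma, part (i): if each `W_i(u)` has the same distribution as
`W₀(u)`, the second moments `E[W₀(u)²]^{1/2}` are uniformly bounded on `[0,1]`, `W₀` is
Hölder continuous in `L²` on `[0,1]`, the weights satisfy
`limsup_n (1/n)∑_{i=1}^n |a_n(i/n)| < ∞` (i.e. the averages are eventually bounded by
some `B`), and `c_n → ∞`, then
`(1/n)·∑_{i=1}^n |a_n(i/n)|·E[W_i(i/n)²·1_{|W_i(i/n)| > c_n}] → 0`. -/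
theorem lindeberg_averaging
    {Ω : Type*} [MeasurableSpace Ω] (P : Measure Ω) [IsProbabilityMeasure P]
    (W : ℕ → ℝ → Ω → ℝ)
    (hWmeas : ∀ i u, Measurable (W i u))
    (hWdist : ∀ (i : ℕ) (u : ℝ), 0 ≤ u → u ≤ 1 →
      Measure.map (W i u) P = Measure.map (W 0 u) P)
    (hWint : ∀ u : ℝ, 0 ≤ u → u ≤ 1 → Integrable (fun ω => (W 0 u ω) ^ 2) P)
    (K : ℝ) (hK : ∀ u : ℝ, 0 ≤ u → u ≤ 1 → Real.sqrt (∫ ω, (W 0 u ω) ^ 2 ∂P) ≤ K)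
    (CW ς : ℝ) (hCW : 0 < CW) (hς0 : 0 < ς) (hς1 : ς ≤ 1)
    (hHolder : ∀ u v : ℝ, 0 ≤ u → u ≤ 1 → 0 ≤ v → v ≤ 1 →
      Real.sqrt (∫ ω, (W 0 u ω - W 0 v ω) ^ 2 ∂P) ≤ CW * |u - v| ^ ς)
    (a : ℕ → ℝ → ℝ) (B : ℝ)
    (hB : ∀ᶠ n : ℕ in Filter.atTop,
      (1 / (n : ℝ)) * ∑ i ∈ Finset.Icc 1 n, |a n ((i : ℝ) / (n : ℝ))| ≤ B)
    (c : ℕ → ℝ) (hc : Filter.Tendsto c Filter.atTop Filter.atTop) :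
    Filter.Tendsto (fun n : ℕ =>
        (1 / (n : ℝ)) * ∑ i ∈ Finset.Icc 1 n, |a n ((i : ℝ) / (n : ℝ))| *
          ∫ ω, (if c n < |W i ((i : ℝ) / (n : ℝ)) ω|
            then (W i ((i : ℝ) / (n : ℝ)) ω) ^ 2 else 0) ∂P)
      Filter.atTop (nhds 0) := by
  set B' : ℝ := max B 0 with hB'def
  have hB'0 : 0 ≤ B' := le_max_right _ _
  rw [NormedAddCommGroup.tendsto_nhds_zero]
  intro ε hε
  have hε' : 0 < ε / (B' + 1) := by positivity
  obtain ⟨c₀, hc₀⟩ := aux_unif P (W 0) (hWmeas 0) hWint K hK CW ς hCW hς0 hHolder hε'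
  filter_upwards [hB, hc.eventually_ge_atTop c₀, eventually_ge_atTop 1]
    with n hBn hcn hn1
  have hn0 : (0 : ℝ) < n := by exact_mod_cast hn1
  -- per-term bounds
  have hterm : ∀ i ∈ Finset.Icc 1 n,
      (0 : ℝ) ≤ (∫ ω, (if c n < |W i ((i : ℝ) / (n : ℝ)) ω|
          then (W i ((i : ℝ) / (n : ℝ)) ω) ^ 2 else 0) ∂P)
      ∧ (∫ ω, (if c n < |W i ((i : ℝ) / (n : ℝ)) ω|
          then (W i ((i : ℝ) / (n : ℝ)) ω) ^ 2 else 0) ∂P) ≤ ε / (B' + 1) := by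
    intro i hi
    rw [Finset.mem_Icc] at hi
    have hu0 : (0 : ℝ) ≤ (i : ℝ) / (n : ℝ) := by positivity
    have hu1 : (i : ℝ) / (n : ℝ) ≤ 1 := by
      rw [div_le_one hn0]
      exact_mod_cast hi.2
    have htr := aux_transfer P (hWmeas i _) (hWmeas 0 _)
      (hWdist i ((i : ℝ) / (n : ℝ)) hu0 hu1) (c n)
    constructor
    · refine integral_nonneg fun ω => ?_
      dsimp only
      split_ifs
      · exact sq_nonneg _
      · exact le_refl 0
    · rw [htr]
      exact hc₀ (c n) hcn _ hu0 hu1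
  have hsum_nonneg : (0 : ℝ) ≤ (1 / (n : ℝ)) * ∑ i ∈ Finset.Icc 1 n,
      |a n ((i : ℝ) / (n : ℝ))| *
        ∫ ω, (if c n < |W i ((i : ℝ) / (n : ℝ)) ω|
          then (W i ((i : ℝ) / (n : ℝ)) ω) ^ 2 else 0) ∂P := by
    refine mul_nonneg (by positivity) (Finset.sum_nonneg fun i hi => ?_)
    exact mul_nonneg (abs_nonneg _) (hterm i hi).1
  have hsum_le : (1 / (n : ℝ)) * ∑ i ∈ Finset.Icc 1 n,
      |a n ((i : ℝ) / (n : ℝ))| *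
        ∫ ω, (if c n < |W i ((i : ℝ) / (n : ℝ)) ω|
          then (W i ((i : ℝ) / (n : ℝ)) ω) ^ 2 else 0) ∂P
      ≤ ε / (B' + 1) * B' := by
    have h1 : ∑ i ∈ Finset.Icc 1 n, |a n ((i : ℝ) / (n : ℝ))| *
          (∫ ω, (if c n < |W i ((i : ℝ) / (n : ℝ)) ω|
            then (W i ((i : ℝ) / (n : ℝ)) ω) ^ 2 else 0) ∂P)
        ≤ ∑ i ∈ Finset.Icc 1 n, |a n ((i : ℝ) / (n : ℝ))| * (ε / (B' + 1)) := by
      refine Finset.sum_le_sum fun i hi => ?_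
      exact mul_le_mul_of_nonneg_left (hterm i hi).2 (abs_nonneg _)
    calc (1 / (n : ℝ)) * ∑ i ∈ Finset.Icc 1 n, |a n ((i : ℝ) / (n : ℝ))| *
          ∫ ω, (if c n < |W i ((i : ℝ) / (n : ℝ)) ω|
            then (W i ((i : ℝ) / (n : ℝ)) ω) ^ 2 else 0) ∂P
        ≤ (1 / (n : ℝ)) * ∑ i ∈ Finset.Icc 1 n,
            |a n ((i : ℝ) / (n : ℝ))| * (ε / (B' + 1)) :=
          mul_le_mul_of_nonneg_left h1 (by positivity)
      _ = (ε / (B' + 1)) * ((1 / (n : ℝ)) * ∑ i ∈ Finset.Icc 1 n,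
            |a n ((i : ℝ) / (n : ℝ))|) := by
          rw [← Finset.sum_mul]
          ring
      _ ≤ (ε / (B' + 1)) * B' := by
          refine mul_le_mul_of_nonneg_left ?_ hε'.le
          exact le_trans hBn (le_max_left _ _)
  rw [Real.norm_eq_abs, abs_of_nonneg hsum_nonneg]
  calc _ ≤ ε / (B' + 1) * B' := hsum_le
    _ < ε := by
        rw [div_mul_eq_mul_div, div_lt_iff₀ (by positivity)]
        nlinarith
end
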